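/- arXiv:2010.11789 — 2 statements merged into one kernel-verified Lean document; each statement's English description precedes it below -/
import Mathlib

section
/- Assume (HS1) and (HS2) hold and pick r̄ ∈ (0,1) so that (HS3_r̄), (HW1_r̄) and (HW2_r̄) are satisfied. Fix an integer q ≥ 1 and a constant θ ∈ q^{-1}{1,…,q} with gcd(θq, q) = 1. Then there exists λ* ∈ (0, λ̃] such that for every λ ∈ ℂ with Re λ > −λ*, every ρ ∈ [0,1], and every y ∈ ℝ, the characteristic operator Δ_{q,θ,ρ;λ}(iy) on the complexification of ℓ²_{q,⊥;∞} is injective (equivalently, its determinant is nonzero). -/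
open MeasureTheory Filter Topology

noncomputable section

/-- Vectors in `ℝ^d`. -/
abbrev Vec (d : ℕ) := Fin d → ℝ

/-- Vectors in `ℂ^d`. -/
abbrev VecC (d : ℕ) := Fin d → ℂ

variable {d : ℕ}

/-- Euclidean dot product on `ℝ^d`. -/
def dotV {d : ℕ} (x y : Vec d) : ℝ := ∑ i, x i * y i

/-- The spatial mixed-difference operator `Δ₀` with (diagonal) coefficients `α` and constant `τ`:
`(Δ₀ F)(ξ) = τ Σ_{m>0} α_m [F(ξ+m) + F(ξ-m) - 2 F(ξ)]`. -/
def Δ0op {d : ℕ} (τ : ℝ) (α : ℕ → Vec d) (F : ℝ → Vec d) : ℝ → Vec d :=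
  fun ξ i => τ * ∑' m : ℕ, α (m + 1) i *
    (F (ξ + ((m : ℝ) + 1)) i + F (ξ - ((m : ℝ) + 1)) i - 2 * F ξ i)

/-- Complexification of `Δ₀`. -/
def Δ0opC {d : ℕ} (τ : ℝ) (α : ℕ → Vec d) (F : ℝ → VecC d) : ℝ → VecC d :=
  fun ξ i => (τ : ℂ) * ∑' m : ℕ, ((α (m + 1) i : ℝ) : ℂ) *
    (F (ξ + ((m : ℝ) + 1)) i + F (ξ - ((m : ℝ) + 1)) i - 2 * F ξ i)

/-- Assumption (HS1).  The matrices `α_m` are encoded by their diagonals `α m : ℝ^d`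
(indexed so that `α (m+1)` is the coefficient `α_{m+1}`, `m ≥ 0`). -/
structure HS1 (d ddiff : ℕ) (τ : ℝ) (α : ℕ → Vec d) (ν : ℝ) : Prop where
  τ_pos : 0 < τ
  ddiff_pos : 1 ≤ ddiff
  ddiff_le : ddiff ≤ d
  ν_pos : 0 < ν
  diff_nonzero : ∀ i : Fin d, (i : ℕ) < ddiff → ∃ m : ℕ, α (m + 1) i ≠ 0
  nondiff_zero : ∀ i : Fin d, ddiff ≤ (i : ℕ) → ∀ m : ℕ, α (m + 1) i = 0
  exp_summable : Summable (fun m : ℕ => ‖α (m + 1)‖ * Real.exp (((m : ℝ) + 1) * ν))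
  second_moment : ∀ i : Fin d, (i : ℕ) < ddiff →
    ∑' m : ℕ, α (m + 1) i * ((m : ℝ) + 1) ^ 2 = 1
  A_pos : ∀ i : Fin d, (i : ℕ) < ddiff → ∀ z : ℝ, 0 < z → z < 2 * Real.pi →
    0 < ∑' m : ℕ, α (m + 1) i * (1 - Real.cos (((m : ℝ) + 1) * z))

/-- Assumption (HS2): `G : ℝ^d × (0,1) → ℝ^d` is `C²` and `G(P^±; r) = 0` for all `r ∈ (0,1)`. -/
structure HS2 (d : ℕ) (G : Vec d → ℝ → Vec d) (Pm Pp : Vec d) : Prop where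
  smooth : ContDiffOn ℝ 2 (fun z : Vec d × ℝ => G z.1 z.2) (Set.univ ×ˢ Set.Ioo (0:ℝ) 1)
  zero_m : ∀ r ∈ Set.Ioo (0:ℝ) 1, G Pm r = 0
  zero_p : ∀ r ∈ Set.Ioo (0:ℝ) 1, G Pp r = 0

/-- The Jacobian `D_U G(U; r)` as a `d × d` matrix. -/
def DUG {d : ℕ} (G : Vec d → ℝ → Vec d) (U : Vec d) (r : ℝ) : Matrix (Fin d) (Fin d) ℝ :=
  fun i j => fderiv ℝ (fun V => G V r i) U (Pi.single j 1)

/-- A (not necessarily symmetric) real matrix is positive definite if `xᵀ M x > 0` for `x ≠ 0`. -/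
def PosDefQ {d : ℕ} (M : Matrix (Fin d) (Fin d) ℝ) : Prop :=
  ∀ x : Vec d, x ≠ 0 → 0 < dotV x (M.mulVec x)

/-- `x` is supported in the first `ddiff` coordinates. -/
def SuppFirst (d ddiff : ℕ) (x : Vec d) : Prop := ∀ i : Fin d, ddiff ≤ (i : ℕ) → x i = 0

/-- `x` is supported in the last `d - ddiff` coordinates. -/
def SuppLast (d ddiff : ℕ) (x : Vec d) : Prop := ∀ i : Fin d, (i : ℕ) < ddiff → x i = 0

/-- Alternative (a) of assumption (HS3). -/
def HS3a {d : ℕ} (G : Vec d → ℝ → Vec d) (Pm Pp : Vec d) (r : ℝ) : Prop :=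
  PosDefQ (-(DUG G Pm r)) ∧ PosDefQ (-(DUG G Pp r))

/-- Alternative (b) of assumption (HS3): the blocks `−G^{[1,1]}(P^±)` and `−G^{[2,2]}(P^±)` are
positive definite (expressed via vectors supported on the corresponding blocks) and
`G^{[1,2]}(U) = −Γ G^{[2,1]}(U)ᵀ` for some `Γ > 0`. -/
def HS3b {d : ℕ} (ddiff : ℕ) (G : Vec d → ℝ → Vec d) (Pm Pp : Vec d) (r : ℝ) : Prop :=
  (∀ P ∈ ({Pm, Pp} : Set (Vec d)),
    (∀ x : Vec d, x ≠ 0 → SuppFirst d ddiff x → 0 < dotV x ((-(DUG G P r)).mulVec x)) ∧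
    (∀ x : Vec d, x ≠ 0 → SuppLast d ddiff x → 0 < dotV x ((-(DUG G P r)).mulVec x))) ∧
  ∃ Γ : ℝ, 0 < Γ ∧ ∀ U : Vec d, ∀ i j : Fin d, (i : ℕ) < ddiff → ddiff ≤ (j : ℕ) →
    DUG G U r i j = -Γ * DUG G U r j i

/-- Assumption (HS3): one of the two alternatives holds. -/
def HS3 {d : ℕ} (ddiff : ℕ) (G : Vec d → ℝ → Vec d) (Pm Pp : Vec d) (r : ℝ) : Prop :=
  HS3a G Pm Pp r ∨ HS3b ddiff G Pm Pp r

/-- `F ∈ H¹(ℝ; ℝ^d)` with (a.e./weak) derivative `F'`: `F` is an indefinite integral of `F'`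
and both belong to `L²`. -/
structure IsH1 {d : ℕ} (F F' : ℝ → Vec d) : Prop where
  fund : ∀ a b : ℝ, F b - F a = ∫ t in a..b, F' t
  memF : MemLp F 2 volume
  memF' : MemLp F' 2 volume

/-- Complex version of `IsH1`. -/
structure IsH1C {d : ℕ} (F F' : ℝ → VecC d) : Prop where
  fund : ∀ a b : ℝ, F b - F a = ∫ t in a..b, F' t
  memF : MemLp F 2 volume
  memF' : MemLp F' 2 volume

/-- The `L²(ℝ;ℝ^d)` pairing. -/
def innerL2 {d : ℕ} (F G : ℝ → Vec d) : ℝ := ∫ ξ : ℝ, dotV (F ξ) (G ξ)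

/-- The operator `L₀ F = c̄₀ F' − Δ₀ F − D_U G(Ū₀(·); r̄) F`, evaluated on a pair `(F, F')`. -/
def L0op {d : ℕ} (τ c0 : ℝ) (α : ℕ → Vec d) (G : Vec d → ℝ → Vec d) (U0 : ℝ → Vec d)
    (r : ℝ) (F F' : ℝ → Vec d) : ℝ → Vec d :=
  fun ξ => c0 • F' ξ - Δ0op τ α F ξ - (DUG G (U0 ξ) r).mulVec (F ξ)

/-- The formal adjoint `L₀* F = −c̄₀ F' − Δ₀ F − D_U G(Ū₀(·); r̄)ᵀ F`. -/
def L0starop {d : ℕ} (τ c0 : ℝ) (α : ℕ → Vec d) (G : Vec d → ℝ → Vec d) (U0 : ℝ → Vec d)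
    (r : ℝ) (F F' : ℝ → Vec d) : ℝ → Vec d :=
  fun ξ => (-c0) • F' ξ - Δ0op τ α F ξ - (DUG G (U0 ξ) r).transpose.mulVec (F ξ)

/-- Complexification of `L₀ + λ`. -/
def L0opC {d : ℕ} (τ c0 : ℝ) (α : ℕ → Vec d) (G : Vec d → ℝ → Vec d) (U0 : ℝ → Vec d)
    (r : ℝ) (lam : ℂ) (F F' : ℝ → VecC d) : ℝ → VecC d :=
  fun ξ i => (c0 : ℂ) * F' ξ i - Δ0opC τ α F ξ i
    - ∑ j, ((DUG G (U0 ξ) r i j : ℝ) : ℂ) * F ξ j + lam * F ξ i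

/-- Bijectivity (in the a.e. sense) of the complexification of `L₀ + λ` from `H¹` to `L²`. -/
def L0CBijective {d : ℕ} (τ c0 : ℝ) (α : ℕ → Vec d) (G : Vec d → ℝ → Vec d)
    (U0 : ℝ → Vec d) (r : ℝ) (lam : ℂ) : Prop :=
  (∀ H : ℝ → VecC d, MemLp H 2 volume →
    ∃ F F' : ℝ → VecC d, IsH1C F F' ∧
      ∀ᵐ ξ ∂(volume : Measure ℝ), L0opC τ c0 α G U0 r lam F F' ξ = H ξ) ∧
  (∀ F F' : ℝ → VecC d, IsH1C F F' →
    (∀ᵐ ξ ∂(volume : Measure ℝ), L0opC τ c0 α G U0 r lam F F' ξ = 0) →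
    (∀ᵐ ξ ∂(volume : Measure ℝ), F ξ = 0))

/-- Assumption (HW1): existence of the travelling wave `(c̄₀, Ū₀)` for the LDE, with
`Ū₀' = U0'` its (continuous) derivative. -/
structure HW1 {d : ℕ} (τ : ℝ) (α : ℕ → Vec d) (G : Vec d → ℝ → Vec d) (Pm Pp : Vec d)
    (r c0 : ℝ) (U0 U0' : ℝ → Vec d) : Prop where
  c0_ne : c0 ≠ 0
  deriv : ∀ ξ : ℝ, HasDerivAt U0 (U0' ξ) ξ
  cont_deriv : Continuous U0'
  bounded : ∃ C : ℝ, ∀ ξ : ℝ, ‖U0 ξ‖ ≤ C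
  eqn : ∀ ξ : ℝ, c0 • U0' ξ = Δ0op τ α U0 ξ + G (U0 ξ) r
  lim_p : Tendsto U0 atTop (nhds Pp)
  lim_m : Tendsto U0 atBot (nhds Pm)

/-- Assumption (HW2): the spectral stability assumption on `L₀`. -/
structure HW2 {d : ℕ} (τ c0 : ℝ) (α : ℕ → Vec d) (G : Vec d → ℝ → Vec d)
    (U0 U0' : ℝ → Vec d) (r : ℝ) (Φp Φp' Φm Φm' : ℝ → Vec d) (lamT : ℝ) : Prop where
  lamT_pos : 0 < lamT
  h1p : IsH1 Φp Φp'
  h1m : IsH1 Φm Φm'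
  eq_deriv : Φp = U0'
  normalisation : innerL2 Φp Φm = 1
  spec : ∀ lam : ℂ, -lamT ≤ lam.re →
    (L0CBijective τ c0 α G U0 r lam ↔
      ¬ ∃ m : ℤ, lam = 2 * Real.pi * Complex.I * c0 * m)
  eig : ∀ lam : ℂ, (∃ m : ℤ, lam = 2 * Real.pi * Complex.I * c0 * m) →
    ∃ F F' : ℝ → VecC d, IsH1C F F' ∧ ¬ (∀ᵐ ξ ∂(volume : Measure ℝ), F ξ = 0) ∧
      ∀ᵐ ξ ∂(volume : Measure ℝ), L0opC τ c0 α G U0 r lam F F' ξ = 0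
  kerL0 : ∀ F F' : ℝ → Vec d, IsH1 F F' →
    ((∀ᵐ ξ ∂(volume : Measure ℝ), L0op τ c0 α G U0 r F F' ξ = 0) ↔
      ∃ c : ℝ, ∀ᵐ ξ ∂(volume : Measure ℝ), F ξ = c • Φp ξ)
  kerL0star : ∀ F F' : ℝ → Vec d, IsH1 F F' →
    ((∀ᵐ ξ ∂(volume : Measure ℝ), L0starop τ c0 α G U0 r F F' ξ = 0) ↔
      ∃ c : ℝ, ∀ᵐ ξ ∂(volume : Measure ℝ), F ξ = c • Φm ξ)
  kerL0_perp : ∀ g : ℝ → Vec d, MemLp g 2 volume →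
    ((∀ F F' : ℝ → Vec d, IsH1 F F' → innerL2 g (L0starop τ c0 α G U0 r F F') = 0) ↔
      ∃ c : ℝ, ∀ᵐ ξ ∂(volume : Measure ℝ), g ξ = c • Φp ξ)
  kerL0star_perp : ∀ g : ℝ → Vec d, MemLp g 2 volume →
    ((∀ F F' : ℝ → Vec d, IsH1 F F' → innerL2 g (L0op τ c0 α G U0 r F F') = 0) ↔
      ∃ c : ℝ, ∀ᵐ ξ ∂(volume : Measure ℝ), g ξ = c • Φm ξ)

/-! ### Exponentially weighted spaces `BC_{-η}` -/

/-- Membership in `BC_{-η}(ℝ;ℝ^d)`: continuous with `sup_ξ e^{η|ξ|}‖F(ξ)‖ < ∞`. -/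
def MemBC {d : ℕ} (η : ℝ) (F : ℝ → Vec d) : Prop :=
  Continuous F ∧ BddAbove (Set.range fun ξ : ℝ => Real.exp (η * |ξ|) * ‖F ξ‖)

/-- The `BC_{-η}` norm `sup_ξ e^{η|ξ|}‖F(ξ)‖`. -/
def BCnorm {d : ℕ} (η : ℝ) (F : ℝ → Vec d) : ℝ := ⨆ ξ : ℝ, Real.exp (η * |ξ|) * ‖F ξ‖

/-- Membership in `BC¹_{-η}(ℝ;ℝ^d)` of `F` with derivative `F'`. -/
def MemBC1 {d : ℕ} (η : ℝ) (F F' : ℝ → Vec d) : Prop :=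
  (∀ ξ : ℝ, HasDerivAt F (F' ξ) ξ) ∧ Continuous F' ∧
  BddAbove (Set.range fun ξ : ℝ => Real.exp (η * |ξ|) * (‖F ξ‖ + ‖F' ξ‖))

/-- The `BC¹_{-η}` norm `sup_ξ e^{η|ξ|}(‖F(ξ)‖ + ‖F'(ξ)‖)`. -/
def BC1norm {d : ℕ} (η : ℝ) (F F' : ℝ → Vec d) : ℝ :=
  ⨆ ξ : ℝ, Real.exp (η * |ξ|) * (‖F ξ‖ + ‖F' ξ‖)

/-! ### BDF coefficients -/

/-- Backward difference `(∂v)(n) = v(n) − v(n−1)`. -/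
def bdiff (v : ℤ → ℝ) : ℤ → ℝ := fun n => v n - v (n - 1)

/-- `(μ, β)` are the order-`k` BDF coefficients: for every scalar sequence `v`,
`Σ_{n=0}^k μ_n v(n−k) = Σ_{n'=1}^k (∂^{n'} v)(0)`, and `β = Σ_{n=1}^k n μ_n`. -/
def BDFcoeff (k : ℕ) (μ : ℕ → ℝ) (β : ℝ) : Prop :=
  (∀ v : ℤ → ℝ, ∑ n ∈ Finset.range (k + 1), μ n * v ((n : ℤ) - (k : ℤ))
      = ∑ n' ∈ Finset.Icc 1 k, (bdiff^[n'] v) 0) ∧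
  β = ∑ n ∈ Finset.Icc 1 k, (n : ℝ) * μ n

/-! ### The grid space `𝒴_M` (functions on `p⁻¹ℤ`, indexed by `ℤ`) -/

/-- Inner product on `𝒴_M = ℓ²_p(ℝ^d)`: `⟨V,W⟩ = p⁻¹ Σ_{j∈ℤ} ⟨V_j, W_j⟩`. -/
def innerY {d : ℕ} (p : ℕ) (V W : ℤ → Vec d) : ℝ := ((p : ℝ))⁻¹ * ∑' j : ℤ, dotV (V j) (W j)

/-- Membership in `𝒴_M = ℓ²_p(ℝ^d)`. -/
def MemY {d : ℕ} (V : ℤ → Vec d) : Prop := Summable fun j : ℤ => dotV (V j) (V j)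

/-- Norm on `𝒴_M`. -/
def normY {d : ℕ} (p : ℕ) (V : ℤ → Vec d) : ℝ := Real.sqrt (innerY p V V)

/-- Norm on `𝒴¹_{k,M}` (with `DV` the discrete derivative of `V`). -/
def normY1 {d : ℕ} (p : ℕ) (V DV : ℤ → Vec d) : ℝ :=
  Real.sqrt (innerY p V V + innerY p DV DV)

/-- The discrete BDF derivative `D_{k,M}` on the grid `p⁻¹ℤ` (a shift by `M⁻¹` is `q` grid
steps, with `M = p/q`). -/
def DkY {d : ℕ} (k : ℕ) (μ : ℕ → ℝ) (β M : ℝ) (q : ℕ) (V : ℤ → Vec d) : ℤ → Vec d :=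
  fun j => β⁻¹ • M • ∑ n' ∈ Finset.range (k + 1), μ n' • V (j - ((k : ℤ) - (n' : ℤ)) * q)

/-- The operator `Δ₀` on the grid `p⁻¹ℤ` (a shift by `m ∈ ℤ_{>0}` is `m·p` grid steps). -/
def Δ0Y {d : ℕ} (τ : ℝ) (α : ℕ → Vec d) (p : ℕ) (V : ℤ → Vec d) : ℤ → Vec d :=
  fun j i => τ * ∑' m : ℕ, α (m + 1) i *
    (V (j + ((m : ℤ) + 1) * p) i + V (j - ((m : ℤ) + 1) * p) i - 2 * V j i)

/-- The linearised fully discrete operator `L_{k,M} : 𝒴¹_{k,M} → 𝒴_M`. -/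
def LkMop {d : ℕ} (τ c0 : ℝ) (α : ℕ → Vec d) (G : Vec d → ℝ → Vec d) (U0 : ℝ → Vec d)
    (r : ℝ) (k : ℕ) (μ : ℕ → ℝ) (β : ℝ) (p q : ℕ) (V : ℤ → Vec d) : ℤ → Vec d :=
  fun j => c0 • DkY k μ β ((p : ℝ) / q) q V j - Δ0Y τ α p V j
    - (DUG G (U0 ((j : ℝ) / p)) r).mulVec (V j)

/-- Restriction of a continuum function to the grid `p⁻¹ℤ`. -/
def restrY {d : ℕ} (p : ℕ) (f : ℝ → Vec d) : ℤ → Vec d := fun j => f ((j : ℝ) / p)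

/-! ### The spaces `ℓ²_{q,⊥}`, `ℋ_M` and the associated operators -/

/-- The `ℓ²_{q,⊥}` inner product on maps `q⁻¹{0,…,q} → ℝ^d` (indexed by `Fin (q+1)`). -/
def innerPerp {d : ℕ} (q : ℕ) (Φ Ψ : Fin (q + 1) → Vec d) : ℝ :=
  (q : ℝ)⁻¹ * ((1 / 2) * dotV (Φ 0) (Ψ 0) + (1 / 2) * dotV (Φ (Fin.last q)) (Ψ (Fin.last q))
    + ∑ ζ ∈ Finset.Ioo (0 : Fin (q + 1)) (Fin.last q), dotV (Φ ζ) (Ψ ζ))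

/-- Index reduction `ℤ → Fin (q+1)` by the representative in `{0,…,q−1}`. -/
def zmodIdx (q : ℕ) (hq : 0 < q) (j : ℤ) : Fin (q + 1) :=
  ⟨(j % (q : ℤ)).toNat, by
    have h2 : j % (q : ℤ) < (q : ℤ) := Int.emod_lt_of_pos j (by exact_mod_cast hq)
    have h1 : 0 ≤ j % (q : ℤ) := Int.emod_nonneg j (by exact_mod_cast hq.ne')
    omega⟩

/-- Extension of an element of `ℋ_M` to all `ζ ∈ q⁻¹ℤ` via the convention
`Φ(ζ±1, ξ) = Φ(ζ, ξ±M⁻¹)`; here `j` is the `ζ`-index in units of `q⁻¹` and `l` the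
`ξ`-index in units of `M⁻¹`. -/
def extH {d : ℕ} (q : ℕ) (hq : 0 < q) (Φ : Fin (q + 1) → ℤ → Vec d) : ℤ → ℤ → Vec d :=
  fun j l => Φ (zmodIdx q hq j) (l + j / (q : ℤ))

/-- The compatibility constraint for `ℋ_M`: `Φ(1,ξ) = Φ(0, ξ + M⁻¹)`. -/
def HConstraint {d : ℕ} (q : ℕ) (Φ : Fin (q + 1) → ℤ → Vec d) : Prop :=
  ∀ l : ℤ, Φ (Fin.last q) l = Φ 0 (l + 1)

/-- Inner product on `ℋ_M`. -/
def innerH {d : ℕ} (q : ℕ) (M : ℝ) (Φ Ψ : Fin (q + 1) → ℤ → Vec d) : ℝ :=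
  M⁻¹ * ∑' l : ℤ, innerPerp q (fun ζ => Φ ζ l) (fun ζ => Ψ ζ l)

/-- Membership in `ℋ_M`. -/
def MemH {d : ℕ} (q : ℕ) (Φ : Fin (q + 1) → ℤ → Vec d) : Prop :=
  Summable fun l : ℤ => innerPerp q (fun ζ => Φ ζ l) (fun ζ => Φ ζ l)

/-- Norm on `ℋ_M`. -/
def normH {d : ℕ} (q : ℕ) (M : ℝ) (Φ : Fin (q + 1) → ℤ → Vec d) : ℝ :=
  Real.sqrt (innerH q M Φ Φ)

/-- The BDF discrete derivative on `ℋ_M`, acting in the second variable. -/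
def DkH {d : ℕ} (q k : ℕ) (μ : ℕ → ℝ) (β M : ℝ) (Φ : Fin (q + 1) → ℤ → Vec d) :
    Fin (q + 1) → ℤ → Vec d :=
  fun ζ l => β⁻¹ • M • ∑ n' ∈ Finset.range (k + 1), μ n' • Φ ζ (l - ((k : ℤ) - (n' : ℤ)))

/-- The adjoint BDF discrete derivative on `ℋ_M`. -/
def DkHstar {d : ℕ} (q k : ℕ) (μ : ℕ → ℝ) (β M : ℝ) (Φ : Fin (q + 1) → ℤ → Vec d) :
    Fin (q + 1) → ℤ → Vec d :=
  fun ζ l => β⁻¹ • M • ∑ n' ∈ Finset.range (k + 1), μ n' • Φ ζ (l + ((k : ℤ) - (n' : ℤ)))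

/-- Norm on `ℋ¹_{k,M}`. -/
def normH1 {d : ℕ} (q k : ℕ) (μ : ℕ → ℝ) (β M : ℝ) (Φ : Fin (q + 1) → ℤ → Vec d) : ℝ :=
  Real.sqrt (innerH q M Φ Φ + innerH q M (DkH q k μ β M Φ) (DkH q k μ β M Φ))

/-- The operator `Δ_M` on `ℋ_M`, with twist data `t = θq ∈ {1,…,q}` and `n` satisfying
`p = nq + t`, i.e. `1 = (n+θ)M⁻¹`. -/
def ΔMop {d : ℕ} (q : ℕ) (hq : 0 < q) (τ : ℝ) (α : ℕ → Vec d) (t n : ℤ)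
    (Φ : Fin (q + 1) → ℤ → Vec d) : Fin (q + 1) → ℤ → Vec d :=
  fun ζ l i => τ * ∑' m : ℕ, α (m + 1) i *
    (extH q hq Φ (((ζ : ℕ) : ℤ) + ((m : ℤ) + 1) * t) (l + ((m : ℤ) + 1) * n) i
      + extH q hq Φ (((ζ : ℕ) : ℤ) - ((m : ℤ) + 1) * t) (l - ((m : ℤ) + 1) * n) i
      - 2 * Φ ζ l i)

/-- The fully discrete linearised operator `𝒦_{k,M} : ℋ¹_{k,M} → ℋ_M`. -/
def KkM {d : ℕ} (q : ℕ) (hq : 0 < q) (τ c0 : ℝ) (α : ℕ → Vec d) (G : Vec d → ℝ → Vec d)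
    (U0 : ℝ → Vec d) (r : ℝ) (k : ℕ) (μ : ℕ → ℝ) (β : ℝ) (p : ℕ) (t n : ℤ)
    (Φ : Fin (q + 1) → ℤ → Vec d) : Fin (q + 1) → ℤ → Vec d :=
  fun ζ l => c0 • DkH q k μ β ((p : ℝ) / q) Φ ζ l - ΔMop q hq τ α t n Φ ζ l
    - (DUG G (U0 (((l * (q : ℤ) + ((ζ : ℕ) : ℤ) : ℤ) : ℝ) / p)) r).mulVec (Φ ζ l)

/-- The adjoint fully discrete operator `𝒦*_{k,M}`. -/
def KkMstar {d : ℕ} (q : ℕ) (hq : 0 < q) (τ c0 : ℝ) (α : ℕ → Vec d) (G : Vec d → ℝ → Vec d)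
    (U0 : ℝ → Vec d) (r : ℝ) (k : ℕ) (μ : ℕ → ℝ) (β : ℝ) (p : ℕ) (t n : ℤ)
    (Φ : Fin (q + 1) → ℤ → Vec d) : Fin (q + 1) → ℤ → Vec d :=
  fun ζ l => c0 • DkHstar q k μ β ((p : ℝ) / q) Φ ζ l - ΔMop q hq τ α t n Φ ζ l
    - (DUG G (U0 (((l * (q : ℤ) + ((ζ : ℕ) : ℤ) : ℤ) : ℝ) / p)) r).transpose.mulVec (Φ ζ l)

/-- Sampling of a continuum function into `ℋ_M`: `[π_{ℋ_M}f](ζ,ξ) = f(ξ + ζM⁻¹)`. -/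
def piH {d : ℕ} (q p : ℕ) (f : ℝ → Vec d) : Fin (q + 1) → ℤ → Vec d :=
  fun ζ l => f (((l * (q : ℤ) + ((ζ : ℕ) : ℤ) : ℤ) : ℝ) / p)

/-- The twist datum `t = θ(M)·q ∈ {1,…,q}` associated with `M = p/q`. -/
def tOf (q p : ℕ) : ℤ := if p % q = 0 then (q : ℤ) else ((p % q : ℕ) : ℤ)

/-- The integer `n(M)` with `1 = (n + θ)M⁻¹`, i.e. `p = n q + t`. -/
def nOf (q p : ℕ) : ℤ := ((p : ℤ) - tOf q p) / (q : ℤ)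

/-! ### The limiting operators on `H¹(ℝ, ℓ²_{q,⊥;∞})` -/

/-- Periodic extension in `ζ` of a function `Θ(ζ,ξ)` using the convention
`Θ(ζ+1,ξ) = Θ(ζ,ξ)`. -/
def extPer {d : ℕ} (q : ℕ) (hq : 0 < q) (Θ : Fin (q + 1) → ℝ → Vec d) : ℤ → ℝ → Vec d :=
  fun j ξ => Θ (zmodIdx q hq j) ξ

/-- Complex version of `extPer`. -/
def extPerC {d : ℕ} (q : ℕ) (hq : 0 < q) (Θ : Fin (q + 1) → ℝ → VecC d) : ℤ → ℝ → VecC d :=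
  fun j ξ => Θ (zmodIdx q hq j) ξ

/-- The operator `Δ_{q,θ}` with twist datum `t = θ q`. -/
def ΔQθ {d : ℕ} (q : ℕ) (hq : 0 < q) (τ : ℝ) (α : ℕ → Vec d) (t : ℤ)
    (Θ : Fin (q + 1) → ℝ → Vec d) : Fin (q + 1) → ℝ → Vec d :=
  fun ζ ξ i => τ * ∑' m : ℕ, α (m + 1) i *
    (extPer q hq Θ (((ζ : ℕ) : ℤ) + ((m : ℤ) + 1) * t) (ξ + ((m : ℝ) + 1)) i
      + extPer q hq Θ (((ζ : ℕ) : ℤ) - ((m : ℤ) + 1) * t) (ξ - ((m : ℝ) + 1)) i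
      - 2 * Θ ζ ξ i)

/-- Complex version of `Δ_{q,θ}`. -/
def ΔQθC {d : ℕ} (q : ℕ) (hq : 0 < q) (τ : ℝ) (α : ℕ → Vec d) (t : ℤ)
    (Θ : Fin (q + 1) → ℝ → VecC d) : Fin (q + 1) → ℝ → VecC d :=
  fun ζ ξ i => (τ : ℂ) * ∑' m : ℕ, ((α (m + 1) i : ℝ) : ℂ) *
    (extPerC q hq Θ (((ζ : ℕ) : ℤ) + ((m : ℤ) + 1) * t) (ξ + ((m : ℝ) + 1)) i
      + extPerC q hq Θ (((ζ : ℕ) : ℤ) - ((m : ℤ) + 1) * t) (ξ - ((m : ℝ) + 1)) i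
      - 2 * Θ ζ ξ i)

/-- The limiting operator `𝒦̄_{q,θ} Θ = c̄₀ ∂_ξ Θ − Δ_{q,θ} Θ − D_U G(Ū₀(ξ); r̄) Θ`,
evaluated on a pair `(Θ, Θ')`. -/
def Kbar {d : ℕ} (q : ℕ) (hq : 0 < q) (τ c0 : ℝ) (α : ℕ → Vec d) (G : Vec d → ℝ → Vec d)
    (U0 : ℝ → Vec d) (r : ℝ) (t : ℤ) (Θ Θ' : Fin (q + 1) → ℝ → Vec d) :
    Fin (q + 1) → ℝ → Vec d :=
  fun ζ ξ => c0 • Θ' ζ ξ - ΔQθ q hq τ α t Θ ζ ξ - (DUG G (U0 ξ) r).mulVec (Θ ζ ξ)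

/-- The formal adjoint `𝒦̄*_{q,θ}`. -/
def KbarStar {d : ℕ} (q : ℕ) (hq : 0 < q) (τ c0 : ℝ) (α : ℕ → Vec d)
    (G : Vec d → ℝ → Vec d) (U0 : ℝ → Vec d) (r : ℝ) (t : ℤ)
    (Θ Θ' : Fin (q + 1) → ℝ → Vec d) : Fin (q + 1) → ℝ → Vec d :=
  fun ζ ξ => (-c0) • Θ' ζ ξ - ΔQθ q hq τ α t Θ ζ ξ
    - (DUG G (U0 ξ) r).transpose.mulVec (Θ ζ ξ)

/-- Complexification of `𝒦̄_{q,θ} + λ`. -/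
def KbarC {d : ℕ} (q : ℕ) (hq : 0 < q) (τ c0 : ℝ) (α : ℕ → Vec d) (G : Vec d → ℝ → Vec d)
    (U0 : ℝ → Vec d) (r : ℝ) (t : ℤ) (lam : ℂ) (Θ Θ' : Fin (q + 1) → ℝ → VecC d) :
    Fin (q + 1) → ℝ → VecC d :=
  fun ζ ξ i => (c0 : ℂ) * Θ' ζ ξ i - ΔQθC q hq τ α t Θ ζ ξ i
    - ∑ j, ((DUG G (U0 ξ) r i j : ℝ) : ℂ) * Θ ζ ξ j + lam * Θ ζ ξ i

/-- Membership of a pair `(Θ, Θ')` in `H¹(ℝ, ℓ²_{q,⊥;∞})`. -/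
def IsH1perp {d : ℕ} (q : ℕ) (Θ Θ' : Fin (q + 1) → ℝ → Vec d) : Prop :=
  (∀ ζ, IsH1 (Θ ζ) (Θ' ζ)) ∧ (∀ ξ : ℝ, Θ (Fin.last q) ξ = Θ 0 ξ) ∧
    (∀ ξ : ℝ, Θ' (Fin.last q) ξ = Θ' 0 ξ)

/-- Complex version of `IsH1perp`. -/
def IsH1perpC {d : ℕ} (q : ℕ) (Θ Θ' : Fin (q + 1) → ℝ → VecC d) : Prop :=
  (∀ ζ, IsH1C (Θ ζ) (Θ' ζ)) ∧ (∀ ξ : ℝ, Θ (Fin.last q) ξ = Θ 0 ξ) ∧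
    (∀ ξ : ℝ, Θ' (Fin.last q) ξ = Θ' 0 ξ)

/-- Membership of `Θ` in `L²(ℝ, ℓ²_{q,⊥;∞})`. -/
def MemL2perp {d : ℕ} (q : ℕ) (Θ : Fin (q + 1) → ℝ → Vec d) : Prop :=
  (∀ ζ, MemLp (Θ ζ) 2 (volume : Measure ℝ)) ∧ (∀ ξ : ℝ, Θ (Fin.last q) ξ = Θ 0 ξ)

/-- The `L²(ℝ, ℓ²_{q,⊥})` pairing. -/
def innerL2perp {d : ℕ} (q : ℕ) (Θ Ψ : Fin (q + 1) → ℝ → Vec d) : ℝ :=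
  ∫ ξ : ℝ, innerPerp q (fun ζ => Θ ζ ξ) (fun ζ => Ψ ζ ξ)

/-- The `H¹(ℝ, ℓ²_{q,⊥})` norm of a pair `(Θ, Θ')`. -/
def normH1perp {d : ℕ} (q : ℕ) (Θ Θ' : Fin (q + 1) → ℝ → Vec d) : ℝ :=
  Real.sqrt (innerL2perp q Θ Θ + innerL2perp q Θ' Θ')

/-- The `L²(ℝ, ℓ²_{q,⊥})` norm. -/
def normL2perp {d : ℕ} (q : ℕ) (Θ : Fin (q + 1) → ℝ → Vec d) : ℝ :=
  Real.sqrt (innerL2perp q Θ Θ)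

/-- The embedding `[π_⊥ f](ζ, ξ) = f(ξ)`. -/
def piPerp {d : ℕ} (q : ℕ) (f : ℝ → Vec d) : Fin (q + 1) → ℝ → Vec d := fun _ ξ => f ξ

/-! ### Characteristic matrices and operators -/

/-- `A(y)`: diagonal entries `A_i(y) = Σ_{m>0} α_m^{(i,i)}(1 − cos(my))`. -/
def Afun {d : ℕ} (α : ℕ → Vec d) (y : ℝ) : Fin d → ℝ :=
  fun i => ∑' m : ℕ, α (m + 1) i * (1 - Real.cos (((m : ℝ) + 1) * y))

/-- The averaged Jacobian `DG_ρ = ρ D_U G(P⁻; r̄) + (1−ρ) D_U G(P⁺; r̄)`. -/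
def DGrho {d : ℕ} (G : Vec d → ℝ → Vec d) (Pm Pp : Vec d) (r ρ : ℝ) :
    Matrix (Fin d) (Fin d) ℝ :=
  ρ • DUG G Pm r + (1 - ρ) • DUG G Pp r

/-- The characteristic matrix `Δ_{ρ;λ}(iy) = c̄₀ i y I + 2τ A(y) − DG_ρ + λ I`. -/
def charMat {d : ℕ} (τ c0 : ℝ) (α : ℕ → Vec d) (G : Vec d → ℝ → Vec d) (Pm Pp : Vec d)
    (r ρ y : ℝ) (lam : ℂ) : Matrix (Fin d) (Fin d) ℂ :=
  fun i j => (if i = j then (c0 : ℂ) * (y : ℂ) * Complex.I + lam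
      + 2 * (τ : ℂ) * ((Afun α y i : ℝ) : ℂ) else 0)
    - ((DGrho G Pm Pp r ρ i j : ℝ) : ℂ)

/-- Periodic extension of an element of (the complexification of) `ℓ²_{q,⊥;∞}`. -/
def extFinC {d : ℕ} (q : ℕ) (hq : 0 < q) (V : Fin (q + 1) → VecC d) : ℤ → VecC d :=
  fun j => V (zmodIdx q hq j)

/-- The characteristic operator `Δ_{q,θ,ρ;λ}(iy)` on the complexification of `ℓ²_{q,⊥;∞}`,
with twist datum `t = θq`. -/
def charOp {d : ℕ} (q : ℕ) (hq : 0 < q) (τ c0 : ℝ) (α : ℕ → Vec d)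
    (G : Vec d → ℝ → Vec d) (Pm Pp : Vec d) (r ρ : ℝ) (t : ℤ) (y : ℝ) (lam : ℂ)
    (V : Fin (q + 1) → VecC d) : Fin (q + 1) → VecC d :=
  fun ζ i => ((c0 : ℂ) * (y : ℂ) * Complex.I + lam) * V ζ i
    - (τ : ℂ) * ∑' m : ℕ, ((α (m + 1) i : ℝ) : ℂ) *
        (Complex.exp (Complex.I * ((m : ℝ) + 1) * y) *
            extFinC q hq V (((ζ : ℕ) : ℤ) + ((m : ℤ) + 1) * t) i
          + Complex.exp (-(Complex.I * ((m : ℝ) + 1) * y)) *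
            extFinC q hq V (((ζ : ℕ) : ℤ) - ((m : ℤ) + 1) * t) i
          - 2 * V ζ i)
    - ∑ j, ((DGrho G Pm Pp r ρ i j : ℝ) : ℂ) * V ζ j

/-! ### Interpolation operators -/

/-- The order-zero interpolation `ℐ⁰_M`. -/
def I0interp {d : ℕ} (q : ℕ) (M : ℝ) (Φ : Fin (q + 1) → ℤ → Vec d) :
    Fin (q + 1) → ℝ → Vec d :=
  fun ζ ξ => Φ ζ ⌊M * ξ⌋

/-- The order-one (piecewise linear) interpolation `ℐ¹_{k,M}`. -/
def I1interp {d : ℕ} (q : ℕ) (M : ℝ) (Φ : Fin (q + 1) → ℤ → Vec d) :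
    Fin (q + 1) → ℝ → Vec d :=
  fun ζ ξ => M • ((ξ - (⌊M * ξ⌋ : ℝ) / M) • Φ ζ (⌊M * ξ⌋ + 1)
    + (((⌊M * ξ⌋ : ℝ) + 1) / M - ξ) • Φ ζ ⌊M * ξ⌋)

/-- The a.e. derivative of the piecewise linear interpolation. -/
def I1deriv {d : ℕ} (q : ℕ) (M : ℝ) (Φ : Fin (q + 1) → ℤ → Vec d) :
    Fin (q + 1) → ℝ → Vec d :=
  fun ζ ξ => M • (Φ ζ (⌊M * ξ⌋ + 1) - Φ ζ ⌊M * ξ⌋)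

/-! ### `Δ_M` acting on continuum functions (for the convergence lemma) -/

/-- Extension of a continuum function `Θ(ζ,ξ)` via the convention
`Θ(ζ±1,ξ) = Θ(ζ, ξ±M⁻¹)`, where `Minv = M⁻¹`. -/
def extContM {d : ℕ} (q : ℕ) (hq : 0 < q) (Minv : ℝ) (Θ : Fin (q + 1) → ℝ → Vec d) :
    ℤ → ℝ → Vec d :=
  fun j ξ => Θ (zmodIdx q hq j) (ξ + ((j / (q : ℤ) : ℤ) : ℝ) * Minv)

/-- The operator `Δ_M` acting on continuum functions of `(ζ, ξ)`, with twist data `(t, n)`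
and `Minv = M⁻¹`. -/
def ΔMcont {d : ℕ} (q : ℕ) (hq : 0 < q) (τ : ℝ) (α : ℕ → Vec d) (t n : ℤ) (Minv : ℝ)
    (Θ : Fin (q + 1) → ℝ → Vec d) : Fin (q + 1) → ℝ → Vec d :=
  fun ζ ξ i => τ * ∑' m : ℕ, α (m + 1) i *
    (extContM q hq Minv Θ (((ζ : ℕ) : ℤ) + ((m : ℤ) + 1) * t)
        (ξ + ((m : ℝ) + 1) * (n : ℝ) * Minv) i
      + extContM q hq Minv Θ (((ζ : ℕ) : ℤ) - ((m : ℤ) + 1) * t)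
        (ξ - ((m : ℝ) + 1) * (n : ℝ) * Minv) i
      - 2 * Θ ζ ξ i)

/-! ### The quantities `ℰ_{k,M}(δ)`, `κ(δ)` and the resolvent bound -/

/-- The quantity `ℰ_{k,M}(δ)` from the spectral convergence method. -/
def EkM {d : ℕ} (q : ℕ) (hq : 0 < q) (τ c0 : ℝ) (α : ℕ → Vec d) (G : Vec d → ℝ → Vec d)
    (U0 : ℝ → Vec d) (r : ℝ) (k : ℕ) (μ : ℕ → ℝ) (β : ℝ) (Φm : ℝ → Vec d)
    (p : ℕ) (δ : ℝ) : ℝ :=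
  sInf { x : ℝ | ∃ Φ : Fin (q + 1) → ℤ → Vec d, HConstraint q Φ ∧ MemH q Φ ∧
    normH1 q k μ β ((p : ℝ) / q) Φ = 1 ∧
    x = normH q ((p : ℝ) / q)
          (fun ζ l => KkM q hq τ c0 α G U0 r k μ β p (tOf q p) (nOf q p) Φ ζ l + δ • Φ ζ l)
      + δ⁻¹ * |innerH q ((p : ℝ) / q) (piH q p Φm)
          (fun ζ l => KkM q hq τ c0 α G U0 r k μ β p (tOf q p) (nOf q p) Φ ζ l + δ • Φ ζ l)| }

/-- The quantity `ℰ*_{k,M}(δ)`, defined analogously with `𝒦*_{k,M}` and `Φ₀⁺`. -/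
def EkMstar {d : ℕ} (q : ℕ) (hq : 0 < q) (τ c0 : ℝ) (α : ℕ → Vec d) (G : Vec d → ℝ → Vec d)
    (U0 : ℝ → Vec d) (r : ℝ) (k : ℕ) (μ : ℕ → ℝ) (β : ℝ) (Φp : ℝ → Vec d)
    (p : ℕ) (δ : ℝ) : ℝ :=
  sInf { x : ℝ | ∃ Φ : Fin (q + 1) → ℤ → Vec d, HConstraint q Φ ∧ MemH q Φ ∧
    normH1 q k μ β ((p : ℝ) / q) Φ = 1 ∧
    x = normH q ((p : ℝ) / q)
          (fun ζ l => KkMstar q hq τ c0 α G U0 r k μ β p (tOf q p) (nOf q p) Φ ζ l + δ • Φ ζ l)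
      + δ⁻¹ * |innerH q ((p : ℝ) / q) (piH q p Φp)
          (fun ζ l => KkMstar q hq τ c0 α G U0 r k μ β p (tOf q p) (nOf q p) Φ ζ l + δ • Φ ζ l)| }

/-- `κ(δ) = liminf_{M → ∞, M ∈ ℳ_q} ℰ_{k,M}(δ)`. -/
def kappaE {d : ℕ} (q : ℕ) (hq : 0 < q) (τ c0 : ℝ) (α : ℕ → Vec d) (G : Vec d → ℝ → Vec d)
    (U0 : ℝ → Vec d) (r : ℝ) (k : ℕ) (μ : ℕ → ℝ) (β : ℝ) (Φm : ℝ → Vec d) (δ : ℝ) : ℝ :=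
  Filter.liminf (fun p : ℕ => EkM q hq τ c0 α G U0 r k μ β Φm p δ)
    (Filter.atTop ⊓ Filter.principal {p : ℕ | Nat.Coprime p q ∧ q ≤ p})

/-- `κ*(δ) = liminf_{M → ∞, M ∈ ℳ_q} ℰ*_{k,M}(δ)`. -/
def kappaEstar {d : ℕ} (q : ℕ) (hq : 0 < q) (τ c0 : ℝ) (α : ℕ → Vec d)
    (G : Vec d → ℝ → Vec d) (U0 : ℝ → Vec d) (r : ℝ) (k : ℕ) (μ : ℕ → ℝ) (β : ℝ)
    (Φp : ℝ → Vec d) (δ : ℝ) : ℝ :=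
  Filter.liminf (fun p : ℕ => EkMstar q hq τ c0 α G U0 r k μ β Φp p δ)
    (Filter.atTop ⊓ Filter.principal {p : ℕ | Nat.Coprime p q ∧ q ≤ p})

/-- The resolvent bound for the limiting operator `𝒦̄_{q,θ}` (with twist datum `t = θq`):
for `0 < δ < δ0`, `𝒦̄_{q,θ} + δ` is surjective onto `L²(ℝ,ℓ²_{q,⊥;∞})` and every solution
obeys the `H¹` estimate with constant `C`. -/
def ResolventBound {d : ℕ} (q : ℕ) (hq : 0 < q) (τ c0 : ℝ) (α : ℕ → Vec d)
    (G : Vec d → ℝ → Vec d) (U0 : ℝ → Vec d) (r : ℝ) (t : ℤ) (Φm : ℝ → Vec d)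
    (C δ0 : ℝ) : Prop :=
  ∀ δ : ℝ, 0 < δ → δ < δ0 →
    (∀ Θ : Fin (q + 1) → ℝ → Vec d, MemL2perp q Θ →
      ∃ Φ Φ' : Fin (q + 1) → ℝ → Vec d, IsH1perp q Φ Φ' ∧
        ∀ᵐ ξ ∂(volume : Measure ℝ), ∀ ζ,
          Kbar q hq τ c0 α G U0 r t Φ Φ' ζ ξ + δ • Φ ζ ξ = Θ ζ ξ) ∧
    (∀ Θ Φ Φ' : Fin (q + 1) → ℝ → Vec d, MemL2perp q Θ → IsH1perp q Φ Φ' →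
      (∀ᵐ ξ ∂(volume : Measure ℝ), ∀ ζ,
          Kbar q hq τ c0 α G U0 r t Φ Φ' ζ ξ + δ • Φ ζ ξ = Θ ζ ξ) →
      normH1perp q Φ Φ' ≤ C * (normL2perp q Θ + δ⁻¹ * |innerL2perp q Θ (piPerp q Φm)|))

/-- The second derivative `D²G(U;r)[a,b]` of the nonlinearity. -/
def D2G {d : ℕ} (G : Vec d → ℝ → Vec d) (U : Vec d) (r : ℝ) (a b : Vec d) : Vec d :=
  fun i => fderiv ℝ (fun V => fderiv ℝ (fun W => G W r i) V a) U b

/-- The quasi-inverse `L₀^{qinv} G = L₀⁻¹[G − (⟨Φ₀⁻,G⟩/⟨Φ₀⁻,Φ₀⁺⟩) Φ₀⁺]`, built from a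
given inverse `Linv` of the restriction `L₀ : X₀ → Y₀`. -/
def qinvOf {d : ℕ} (Linv : (ℝ → Vec d) → (ℝ → Vec d)) (Φp Φm : ℝ → Vec d)
    (Gf : ℝ → Vec d) : ℝ → Vec d :=
  Linv (fun ξ => Gf ξ - (innerL2 Φm Gf / innerL2 Φm Φp) • Φp ξ)


section AuxLemmas
open Real

lemma sum_shift_one (q : ℕ) (g : ℤ → ℂ) (hper : ∀ j : ℤ, g (j + q) = g j) (s : ℤ) :
    ∑ j ∈ Finset.range q, g ((j : ℤ) + (s + 1)) = ∑ j ∈ Finset.range q, g ((j : ℤ) + s) := by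
  have h1 : ∀ j : ℕ, g ((j : ℤ) + (s + 1)) = g (((j + 1 : ℕ) : ℤ) + s) := by
    intro j; congr 1; push_cast; ring
  calc ∑ j ∈ Finset.range q, g ((j : ℤ) + (s + 1))
      = ∑ j ∈ Finset.range q, g (((j + 1 : ℕ) : ℤ) + s) := by
        exact Finset.sum_congr rfl fun j _ => h1 j
    _ = (∑ j ∈ Finset.range (q+1), g ((j:ℤ) + s)) - g ((0:ℤ) + s) := by
        rw [Finset.sum_range_succ']; push_cast; ring
    _ = ∑ j ∈ Finset.range q, g ((j:ℤ) + s) := by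
        rw [Finset.sum_range_succ]
        have : g ((q:ℤ) + s) = g ((0:ℤ) + s) := by
          rw [zero_add]; rw [show (q:ℤ) + s = s + q by ring, hper]
        rw [this]; ring

lemma sum_range_shift (q : ℕ) (g : ℤ → ℂ) (hper : ∀ j : ℤ, g (j + q) = g j) (s : ℤ) :
    ∑ j ∈ Finset.range q, g ((j : ℤ) + s) = ∑ j ∈ Finset.range q, g (j : ℤ) := by
  induction s using Int.induction_on with
  | zero => simp
  | succ n ih => rw [sum_shift_one q g hper n, ih]
  | pred n ih =>
      have := sum_shift_one q g hper (-(n+1))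
      rw [show (-(n+1) + 1 : ℤ) = -n by ring] at this
      have h2 : ∑ j ∈ Finset.range q, g ((j:ℤ) + (-(n:ℤ) - 1))
          = ∑ j ∈ Finset.range q, g ((j:ℤ) + -((n:ℤ)+1)) :=
        Finset.sum_congr rfl fun j _ => by congr 1; ring
      rw [h2, ← this]; exact ih


lemma char_sum_ne (q : ℕ) (hq : 0 < q) (s : ℤ) (hs : ¬ ((q:ℤ) ∣ s)) :
    ∑ k ∈ Finset.range q, Complex.exp (2 * (π:ℂ) * Complex.I * s * k / q) = 0 := by
  have hq' : (q:ℂ) ≠ 0 := Nat.cast_ne_zero.mpr hq.ne'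
  set x : ℂ := Complex.exp (2 * (π:ℂ) * Complex.I * s / q) with hx
  have hterm : ∀ k : ℕ, Complex.exp (2 * (π:ℂ) * Complex.I * s * k / q) = x ^ k := by
    intro k
    rw [hx, ← Complex.exp_nat_mul]
    congr 1; field_simp
  have hx1 : x ≠ 1 := by
    intro h
    rw [hx, Complex.exp_eq_one_iff] at h
    obtain ⟨n, hn⟩ := h
    apply hs
    refine ⟨n, ?_⟩
    have hπ : (π:ℂ) ≠ 0 := Complex.ofReal_ne_zero.mpr Real.pi_ne_zero
    have h2 : (2:ℂ) * π * Complex.I ≠ 0 := by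
      simp [hπ, Complex.I_ne_zero]
    have key : (2*(π:ℂ)*Complex.I) * (s:ℂ) = (2*(π:ℂ)*Complex.I) * ((q:ℂ)*n) := by
      have hq2 : (2 * (π:ℂ) * Complex.I * s / q) * q = ((n:ℂ) * (2 * π * Complex.I)) * q := by
        rw [hn]
      field_simp at hq2
      linear_combination (2*(π:ℂ)*Complex.I) * hq2
    have : (s:ℂ) = (q:ℂ)*n := mul_left_cancel₀ h2 key
    exact_mod_cast this
  have hxq : x ^ q = 1 := by
    rw [hx, ← Complex.exp_nat_mul]
    rw [show (q:ℂ) * (2 * (π:ℂ) * Complex.I * s / q) = (s:ℂ) * (2 * π * Complex.I) by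
      field_simp]
    exact_mod_cast Complex.exp_int_mul_two_pi_mul_I s
  calc ∑ k ∈ Finset.range q, Complex.exp (2 * (π:ℂ) * Complex.I * s * k / q)
      = ∑ k ∈ Finset.range q, x ^ k := Finset.sum_congr rfl fun k _ => hterm k
    _ = (x ^ q - 1) / (x - 1) := geom_sum_eq hx1 q
    _ = 0 := by rw [hxq]; simp


lemma fourier_inversion (q : ℕ) (hq : 0 < q) (f : ℕ → ℂ)
    (h : ∀ k ∈ Finset.range q, ∑ j ∈ Finset.range q,
      Complex.exp (-(2 * (π:ℂ) * Complex.I * k * j) / q) * f j = 0)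
    (j₀ : ℕ) (hj₀ : j₀ ∈ Finset.range q) : f j₀ = 0 := by
  have hq' : (q:ℂ) ≠ 0 := Nat.cast_ne_zero.mpr hq.ne'
  have key : ∑ k ∈ Finset.range q, Complex.exp (2 * (π:ℂ) * Complex.I * k * j₀ / q) *
      ∑ j ∈ Finset.range q, Complex.exp (-(2 * (π:ℂ) * Complex.I * k * j) / q) * f j = 0 := by
    exact Finset.sum_eq_zero fun k hk => by rw [h k hk, mul_zero]
  have swap : ∑ k ∈ Finset.range q, Complex.exp (2 * (π:ℂ) * Complex.I * k * j₀ / q) *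
      ∑ j ∈ Finset.range q, Complex.exp (-(2 * (π:ℂ) * Complex.I * k * j) / q) * f j
      = ∑ j ∈ Finset.range q, (∑ k ∈ Finset.range q,
          Complex.exp (2 * (π:ℂ) * Complex.I * ((j₀:ℤ) - (j:ℤ)) * k / q)) * f j := by
    simp_rw [Finset.mul_sum]
    rw [Finset.sum_comm]
    refine Finset.sum_congr rfl fun j _ => ?_
    rw [Finset.sum_mul]
    refine Finset.sum_congr rfl fun k _ => ?_
    rw [← mul_assoc, ← Complex.exp_add]
    congr 2
    push_cast
    field_simp
    ring
  rw [swap] at key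
  have horth : ∀ j ∈ Finset.range q, j ≠ j₀ →
      (∑ k ∈ Finset.range q, Complex.exp (2 * (π:ℂ) * Complex.I * ((j₀:ℤ) - (j:ℤ)) * k / q)) * f j = 0 := by
    intro j hj hne
    have : ¬ ((q:ℤ) ∣ ((j₀:ℤ) - (j:ℤ))) := by
      simp only [Finset.mem_range] at hj hj₀
      intro hdvd
      rcases hdvd with ⟨c, hc⟩
      have : (j₀ : ℤ) - j = 0 := by
        rcases lt_trichotomy c 0 with h1 | h1 | h1
        · nlinarith [hc, (by exact_mod_cast hj₀ : (j₀:ℤ) < q), (by exact_mod_cast hj : (j:ℤ) < q),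
            (by positivity : (0:ℤ) ≤ (j₀:ℤ)), (by positivity : (0:ℤ) ≤ (j:ℤ))]
        · simp [h1] at hc; omega
        · nlinarith [hc, (by exact_mod_cast hj₀ : (j₀:ℤ) < q), (by exact_mod_cast hj : (j:ℤ) < q),
            (by positivity : (0:ℤ) ≤ (j₀:ℤ)), (by positivity : (0:ℤ) ≤ (j:ℤ))]
      omega
    have hc := char_sum_ne q hq _ this
    push_cast at hc ⊢
    rw [hc, zero_mul]
  rw [Finset.sum_eq_single_of_mem j₀ hj₀ horth] at key
  simp only [sub_self, zero_mul, mul_zero, zero_div, Complex.exp_zero, Finset.sum_const,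
    Finset.card_range, nsmul_eq_mul, mul_one] at key
  exact (mul_eq_zero.mp key).resolve_left hq'


lemma quad_coercive {d : ℕ} (hd : 0 < d) (B : Matrix (Fin d) (Fin d) ℝ)
    (hpos : ∀ x : Vec d, x ≠ 0 → 0 < ∑ i, ∑ j, B i j * x i * x j) :
    ∃ c : ℝ, 0 < c ∧ ∀ x : Vec d, c * ∑ i, x i ^ 2 ≤ ∑ i, ∑ j, B i j * x i * x j := by
  classical
  set F : EuclideanSpace ℝ (Fin d) → ℝ := fun x => ∑ i, ∑ j, B i j * x i * x j with hF
  have hFc : Continuous F := by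
    apply continuous_finset_sum
    intro i _
    apply continuous_finset_sum
    intro j _
    have h1 : Continuous fun x : EuclideanSpace ℝ (Fin d) => x i := PiLp.continuous_apply 2 _ i
    have h2 : Continuous fun x : EuclideanSpace ℝ (Fin d) => x j := PiLp.continuous_apply 2 _ j
    exact (continuous_const.mul h1).mul h2
  have hne : (Metric.sphere (0 : EuclideanSpace ℝ (Fin d)) 1).Nonempty := by
    refine ⟨EuclideanSpace.single ⟨0, hd⟩ (1:ℝ), ?_⟩
    rw [mem_sphere_zero_iff_norm, EuclideanSpace.norm_single]
    norm_num
  obtain ⟨x₀, hx₀s, hx₀min'⟩ := (isCompact_sphere (0 : EuclideanSpace ℝ (Fin d)) 1).exists_isMinOn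
    hne hFc.continuousOn
  have hx₀min : ∀ y ∈ Metric.sphere (0 : EuclideanSpace ℝ (Fin d)) 1, F x₀ ≤ F y :=
    fun y hy => hx₀min' hy
  have hx₀n : ‖x₀‖ = 1 := mem_sphere_zero_iff_norm.mp hx₀s
  have hx₀ne : (x₀ : Vec d) ≠ 0 := by
    intro h
    have : ‖x₀‖ = 0 := by
      have : x₀ = 0 := by
        ext i
        exact congrFun h i
      simp [this]
    rw [hx₀n] at this; norm_num at this
  set c := F x₀ with hc
  have hcpos : 0 < c := hpos x₀ hx₀ne
  refine ⟨c, hcpos, fun x => ?_⟩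
  by_cases hx : x = 0
  · subst hx
    simp
  · set s := Real.sqrt (∑ i, x i ^ 2) with hs
    have hsum_pos : 0 < ∑ i, x i ^ 2 := by
      have hnn : ∀ i ∈ Finset.univ, (0:ℝ) ≤ x i ^ 2 := fun i _ => sq_nonneg _
      rcases Function.ne_iff.mp hx with ⟨i, hi⟩
      have : 0 < x i ^ 2 := by
        have := sq_nonneg (x i)
        rcases this.lt_or_eq with h | h
        · exact h
        · exact absurd (pow_eq_zero_iff (n := 2) (by norm_num) |>.mp h.symm) hi
      exact Finset.sum_pos' hnn ⟨i, Finset.mem_univ i, this⟩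
    have hspos : 0 < s := Real.sqrt_pos.mpr hsum_pos
    have hs2 : s ^ 2 = ∑ i, x i ^ 2 := Real.sq_sqrt hsum_pos.le
    set u : EuclideanSpace ℝ (Fin d) := WithLp.toLp 2 (fun i => x i / s) with hu
    have hus : u ∈ Metric.sphere (0 : EuclideanSpace ℝ (Fin d)) 1 := by
      rw [mem_sphere_zero_iff_norm, EuclideanSpace.norm_eq]
      have : ∀ i, ‖u i‖ ^ 2 = x i ^ 2 / s ^ 2 := by
        intro i
        rw [Real.norm_eq_abs, _root_.sq_abs, hu]
        field_simp
      rw [Finset.sum_congr rfl fun i _ => this i]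
      rw [← Finset.sum_div, ← hs2]
      rw [div_self (by positivity)]
      exact Real.sqrt_one
    have hmin := hx₀min u hus
    have hFu : F u * s ^ 2 = ∑ i, ∑ j, B i j * x i * x j := by
      rw [hF]
      simp only
      rw [Finset.sum_mul]
      refine Finset.sum_congr rfl fun i _ => ?_
      rw [Finset.sum_mul]
      refine Finset.sum_congr rfl fun j _ => ?_
      have hs0 : s ≠ 0 := hspos.ne'
      rw [hu]
      simp only
      have hkey : (x i / s) * (x j / s) * s ^ 2 = x i * x j := by
        field_simp
      linear_combination B i j * hkey
    calc c * ∑ i, x i ^ 2 = c * s ^ 2 := by rw [hs2]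
      _ ≤ F u * s ^ 2 := by
          apply mul_le_mul_of_nonneg_right hmin (by positivity)
      _ = ∑ i, ∑ j, B i j * x i * x j := hFu


set_option maxHeartbeats 1000000 in
lemma mode_inj {d : ℕ} (lam : ℂ) (c0 y τ : ℝ) (A : Fin d → ℝ) (hA : ∀ i, 0 ≤ A i)
    (hτ : 0 ≤ τ) (DG : Matrix (Fin d) (Fin d) ℝ)
    (weight : Fin d → ℝ) (hwpos : ∀ i, 0 < weight i) (wmax : ℝ) (hwmax : 0 < wmax)
    (hwle : ∀ i, weight i ≤ wmax)
    (c : ℝ) (hc : 0 < c)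
    (hcoer : ∀ x : Vec d, c * ∑ i, x i ^ 2 ≤ -∑ i, ∑ j, weight i * DG i j * x i * x j)
    (hlam : -(c / wmax) < lam.re)
    (w : VecC d)
    (hw : ∀ i, ((c0 : ℂ) * (y:ℂ) * Complex.I + lam) * w i + ((2 * τ * A i : ℝ) : ℂ) * w i
      - ∑ j, ((DG i j : ℝ) : ℂ) * w j = 0) :
    ∀ i, w i = 0 := by
  classical
  set a : Vec d := fun i => (w i).re with ha
  set b : Vec d := fun i => (w i).im with hb
  have hP : ∀ i, weight i * ((lam.re + 2 * τ * A i) * (a i ^ 2 + b i ^ 2))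
      = (∑ j, weight i * DG i j * (a i * a j)) + (∑ j, weight i * DG i j * (b i * b j)) := by
    intro i
    have h := hw i
    have hre := congrArg Complex.re h
    have him := congrArg Complex.im h
    simp only [Complex.add_re, Complex.sub_re, Complex.mul_re, Complex.mul_im,
      Complex.add_im, Complex.sub_im, Complex.I_re, Complex.I_im, Complex.ofReal_re,
      Complex.ofReal_im, Complex.zero_re, Complex.zero_im, Complex.re_sum, Complex.im_sum,
      mul_zero, zero_mul, mul_one, sub_zero, zero_sub, add_zero, zero_add, neg_zero] at hre him
    have e1 : ∑ j, weight i * DG i j * (a i * a j)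
        = (weight i * a i) * ∑ j, DG i j * (w j).re := by
      rw [Finset.mul_sum]; exact Finset.sum_congr rfl fun j _ => by simp [ha]; ring
    have e2 : ∑ j, weight i * DG i j * (b i * b j)
        = (weight i * b i) * ∑ j, DG i j * (w j).im := by
      rw [Finset.mul_sum]; exact Finset.sum_congr rfl fun j _ => by simp [hb]; ring
    rw [e1, e2]
    have hre' : ∑ j, DG i j * (w j).re
        = lam.re * (w i).re - (c0 * y + lam.im) * (w i).im + 2 * τ * A i * (w i).re := by
      linarith [hre]
    have him' : ∑ j, DG i j * (w j).im
        = lam.re * (w i).im + (c0 * y + lam.im) * (w i).re + 2 * τ * A i * (w i).im := by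
      linarith [him]
    rw [hre', him']
    simp only [ha, hb]
    ring
  -- sum over i
  have hsum : ∑ i, weight i * ((lam.re + 2 * τ * A i) * (a i ^ 2 + b i ^ 2))
      = (∑ i, ∑ j, weight i * DG i j * (a i * a j))
        + (∑ i, ∑ j, weight i * DG i j * (b i * b j)) := by
    rw [← Finset.sum_add_distrib]
    exact Finset.sum_congr rfl fun i _ => hP i
  set R : ℝ := (∑ i, a i ^ 2) + (∑ i, b i ^ 2) with hR
  have hRnn : 0 ≤ R := by positivity
  have hQa := hcoer a
  have hQb := hcoer b
  -- match shapes : hcoer uses weight i * DG i j * x i * x j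
  have hQa' : (∑ i, ∑ j, weight i * DG i j * (a i * a j)) ≤ -(c * ∑ i, a i ^ 2) := by
    have : (∑ i, ∑ j, weight i * DG i j * (a i * a j))
        = ∑ i, ∑ j, weight i * DG i j * a i * a j := by
      exact Finset.sum_congr rfl fun i _ => Finset.sum_congr rfl fun j _ => by ring
    rw [this]; linarith
  have hQb' : (∑ i, ∑ j, weight i * DG i j * (b i * b j)) ≤ -(c * ∑ i, b i ^ 2) := by
    have : (∑ i, ∑ j, weight i * DG i j * (b i * b j))
        = ∑ i, ∑ j, weight i * DG i j * b i * b j := by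
      exact Finset.sum_congr rfl fun i _ => Finset.sum_congr rfl fun j _ => by ring
    rw [this]; linarith
  set N : ℝ := ∑ i, weight i * (a i ^ 2 + b i ^ 2) with hN
  have hNnn : 0 ≤ N := Finset.sum_nonneg fun i _ =>
    mul_nonneg (hwpos i).le (by positivity)
  have hLB : lam.re * N ≤ ∑ i, weight i * ((lam.re + 2 * τ * A i) * (a i ^ 2 + b i ^ 2)) := by
    have hsplit : ∑ i, weight i * ((lam.re + 2 * τ * A i) * (a i ^ 2 + b i ^ 2))
        = lam.re * N + ∑ i, weight i * (2 * τ * A i * (a i ^ 2 + b i ^ 2)) := by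
      rw [hN, Finset.mul_sum, ← Finset.sum_add_distrib]
      exact Finset.sum_congr rfl fun i _ => by ring
    rw [hsplit]
    have h2 : 0 ≤ ∑ i, weight i * (2 * τ * A i * (a i ^ 2 + b i ^ 2)) :=
      Finset.sum_nonneg fun i _ => mul_nonneg (hwpos i).le
        (mul_nonneg (mul_nonneg (by linarith) (hA i)) (by positivity))
    linarith
  have key : lam.re * N + c * R ≤ 0 := by
    have : c * R = c * ∑ i, a i ^ 2 + c * ∑ i, b i ^ 2 := by rw [hR]; ring
    nlinarith [hLB, hsum, hQa', hQb']
  have hNle : N ≤ wmax * R := by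
    have h1 : N ≤ ∑ i, wmax * (a i ^ 2 + b i ^ 2) :=
      Finset.sum_le_sum fun i _ => mul_le_mul_of_nonneg_right (hwle i) (by positivity)
    have h2 : ∑ i, wmax * (a i ^ 2 + b i ^ 2) = wmax * R := by
      rw [hR]
      simp only [mul_add, Finset.sum_add_distrib]
      rw [← Finset.mul_sum, ← Finset.mul_sum]
    linarith
  have hR0 : R = 0 := by
    by_contra hRne
    have hRpos : 0 < R := lt_of_le_of_ne hRnn (Ne.symm hRne)
    have hlam2 : -c < lam.re * wmax := by
      rw [show -(c/wmax) = (-c)/wmax by ring] at hlam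
      exact (div_lt_iff₀ hwmax).mp hlam
    rcases le_or_gt 0 lam.re with hsgn | hsgn
    · nlinarith [mul_nonneg hsgn hNnn, mul_pos hc hRpos]
    · nlinarith [mul_nonneg (by linarith : (0:ℝ) ≤ wmax * R - N) (by linarith : (0:ℝ) ≤ -lam.re),
        mul_pos (by linarith : (0:ℝ) < lam.re * wmax + c) hRpos]
  -- conclude w = 0
  intro i
  have hsa : 0 ≤ ∑ i, a i ^ 2 := by positivity
  have hsb : 0 ≤ ∑ i, b i ^ 2 := by positivity
  have hai : a i ^ 2 ≤ 0 := by
    have h1 : a i ^ 2 ≤ ∑ j, a j ^ 2 :=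
      Finset.single_le_sum (fun j _ => sq_nonneg (a j)) (Finset.mem_univ i)
    have : (∑ j, a j ^ 2) + (∑ j, b j ^ 2) = 0 := by rw [← hR]; exact hR0
    linarith
  have hbi : b i ^ 2 ≤ 0 := by
    have h1 : b i ^ 2 ≤ ∑ j, b j ^ 2 :=
      Finset.single_le_sum (fun j _ => sq_nonneg (b j)) (Finset.mem_univ i)
    have : (∑ j, a j ^ 2) + (∑ j, b j ^ 2) = 0 := by rw [← hR]; exact hR0
    linarith
  have ha0 : a i = 0 := by nlinarith [sq_nonneg (a i)]
  have hb0 : b i = 0 := by nlinarith [sq_nonneg (b i)]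
  exact Complex.ext ha0 hb0


lemma norm_exp_eq_one {w : ℂ} (h : w.re = 0) : ‖Complex.exp w‖ = 1 := by
  rw [Complex.norm_exp, h, Real.exp_zero]

lemma fourier_mode (q : ℕ) (hq : 0 < q) (k : ℕ) (t : ℤ) (y : ℝ)
    (a : ℕ → ℝ) (Sa : Summable fun m : ℕ => |a m|)
    (W : ℤ → ℂ) (hWcong : ∀ j j' : ℤ, j % (q:ℤ) = j' % (q:ℤ) → W j = W j')
    (B : ℝ) (hB : ∀ j, ‖W j‖ ≤ B) :
    ∑ j ∈ Finset.range q, Complex.exp (-(2 * (π:ℂ) * Complex.I * k * j) / q) *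
      ∑' m : ℕ, ((a m : ℝ):ℂ) *
        (Complex.exp (Complex.I * ((m:ℝ)+1) * y) * W ((j:ℤ) + ((m:ℤ)+1)*t)
          + Complex.exp (-(Complex.I * ((m:ℝ)+1) * y)) * W ((j:ℤ) - ((m:ℤ)+1)*t)
          - 2 * W (j:ℤ))
    = ((∑' m : ℕ, a m * (2 * Real.cos (((m:ℝ)+1) * (y + 2*π*t*k/q)) - 2) : ℝ) : ℂ)
        * ∑ j ∈ Finset.range q, Complex.exp (-(2 * (π:ℂ) * Complex.I * k * j) / q) * W (j:ℤ) := by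
  classical
  have hq' : (q:ℂ) ≠ 0 := Nat.cast_ne_zero.mpr hq.ne'
  have hB0 : 0 ≤ B := le_trans (norm_nonneg _) (hB 0)
  set ec : ℤ → ℂ := fun j => Complex.exp (-(2 * (π:ℂ) * Complex.I * k * j) / q) with hec
  set g : ℤ → ℂ := fun j => ec j * W j with hg
  -- periodicity of g
  have hone : Complex.exp (-(k:ℂ) * (2 * (π:ℂ) * Complex.I)) = 1 := by
    have h := Complex.exp_int_mul_two_pi_mul_I (-(k:ℤ))
    push_cast at h
    exact h
  have hper : ∀ j : ℤ, g (j + q) = g j := by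
    intro j
    have hW : W (j + q) = W j := hWcong _ _ (by
      simp [Int.add_emod, Int.emod_self, Int.emod_emod_of_dvd])
    have hexp : ec (j + q) = ec j := by
      simp only [hec]
      have h1 : (-(2 * (π:ℂ) * Complex.I * k * (((j + (q:ℤ)) : ℤ) : ℂ)) / q)
          = -(2 * (π:ℂ) * Complex.I * k * ((j:ℤ):ℂ)) / q + (-(k:ℂ)) * (2 * π * Complex.I) := by
        push_cast
        field_simp
        ring
      rw [h1, Complex.exp_add, hone, mul_one]
    simp only [hg]
    rw [hexp, hW]
  set z : ℝ := y + 2*π*t*k/q with hz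
  set Wh : ℂ := ∑ j ∈ Finset.range q, ec (j:ℤ) * W (j:ℤ) with hWh
  -- shifted sums
  have hshift : ∀ s : ℤ, ∑ j ∈ Finset.range q, ec (j:ℤ) * W ((j:ℤ) + s)
      = Complex.exp (2 * (π:ℂ) * Complex.I * k * s / q) * Wh := by
    intro s
    have hterm : ∀ j : ℕ, ec (j:ℤ) * W ((j:ℤ) + s)
        = Complex.exp (2 * (π:ℂ) * Complex.I * k * s / q) * g ((j:ℤ) + s) := by
      intro j
      simp only [hg, hec]
      rw [← mul_assoc, ← Complex.exp_add]
      congr 2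
      push_cast
      field_simp
      ring
    calc ∑ j ∈ Finset.range q, ec (j:ℤ) * W ((j:ℤ) + s)
        = ∑ j ∈ Finset.range q, Complex.exp (2 * (π:ℂ) * Complex.I * k * s / q) * g ((j:ℤ) + s) :=
          Finset.sum_congr rfl fun j _ => hterm j
      _ = Complex.exp (2 * (π:ℂ) * Complex.I * k * s / q) * ∑ j ∈ Finset.range q, g ((j:ℤ) + s) := by
          rw [Finset.mul_sum]
      _ = Complex.exp (2 * (π:ℂ) * Complex.I * k * s / q) * ∑ j ∈ Finset.range q, g (j:ℤ) := by
          rw [sum_range_shift q g hper s]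
      _ = Complex.exp (2 * (π:ℂ) * Complex.I * k * s / q) * Wh := rfl
  -- summability of the inner tsum for each j
  have hsummand : ∀ j : ℤ, Summable (fun m : ℕ => ((a m : ℝ):ℂ) *
      (Complex.exp (Complex.I * ((m:ℝ)+1) * y) * W (j + ((m:ℤ)+1)*t)
        + Complex.exp (-(Complex.I * ((m:ℝ)+1) * y)) * W (j - ((m:ℤ)+1)*t)
        - 2 * W j)) := by
    intro j
    apply Summable.of_norm_bounded (Sa.mul_right (4*B))
    intro m
    rw [norm_mul]
    have h1 : ‖((a m : ℝ):ℂ)‖ = |a m| := by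
      rw [Complex.norm_real, Real.norm_eq_abs]
    rw [h1]
    refine mul_le_mul_of_nonneg_left ?_ (abs_nonneg _)
    have e1 : ‖Complex.exp (Complex.I * ((m:ℝ)+1) * y) * W (j + ((m:ℤ)+1)*t)‖ ≤ B := by
      rw [norm_mul, norm_exp_eq_one (by
        simp [Complex.mul_re, Complex.add_re, Complex.add_im]), one_mul]
      exact hB _
    have e2 : ‖Complex.exp (-(Complex.I * ((m:ℝ)+1) * y)) * W (j - ((m:ℤ)+1)*t)‖ ≤ B := by
      rw [norm_mul, norm_exp_eq_one (by
        simp [Complex.mul_re, Complex.add_re, Complex.add_im]), one_mul]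
      exact hB _
    have e3 : ‖(2:ℂ) * W j‖ ≤ 2*B := by
      rw [norm_mul]
      have h2 : ‖(2:ℂ)‖ = 2 := by norm_num
      rw [h2]; linarith [hB j]
    refine le_trans (norm_sub_le _ _) ?_
    refine le_trans (add_le_add_left (norm_add_le _ _) _) ?_
    linarith
  -- per-m coefficient identity
  have hm : ∀ m : ℕ, ∑ j ∈ Finset.range q, ec (j:ℤ) * (((a m : ℝ):ℂ) *
      (Complex.exp (Complex.I * ((m:ℝ)+1) * y) * W ((j:ℤ) + ((m:ℤ)+1)*t)
        + Complex.exp (-(Complex.I * ((m:ℝ)+1) * y)) * W ((j:ℤ) - ((m:ℤ)+1)*t)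
        - 2 * W (j:ℤ)))
      = ((a m * (2 * Real.cos (((m:ℝ)+1) * z) - 2) : ℝ) : ℂ) * Wh := by
    intro m
    set s : ℤ := ((m:ℤ)+1)*t with hs
    have hsplit : ∀ j : ℕ, ec (j:ℤ) * (((a m : ℝ):ℂ) *
        (Complex.exp (Complex.I * ((m:ℝ)+1) * y) * W ((j:ℤ) + s)
          + Complex.exp (-(Complex.I * ((m:ℝ)+1) * y)) * W ((j:ℤ) - s)
          - 2 * W (j:ℤ)))
        = ((a m : ℝ):ℂ) * Complex.exp (Complex.I * ((m:ℝ)+1) * y) * (ec (j:ℤ) * W ((j:ℤ) + s))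
          + ((a m : ℝ):ℂ) * Complex.exp (-(Complex.I * ((m:ℝ)+1) * y)) * (ec (j:ℤ) * W ((j:ℤ) + (-s)))
          - ((a m : ℝ):ℂ) * 2 * (ec (j:ℤ) * W (j:ℤ)) := by
      intro j
      rw [show (j:ℤ) - s = (j:ℤ) + (-s) by ring]
      ring
    rw [Finset.sum_congr rfl fun j _ => hsplit j]
    rw [Finset.sum_sub_distrib, Finset.sum_add_distrib, ← Finset.mul_sum, ← Finset.mul_sum,
      ← Finset.mul_sum]
    rw [hshift s, hshift (-s)]
    rw [← hWh]
    rw [show (((-s):ℤ):ℂ) = -(s:ℂ) by push_cast; ring]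
    have hc1 : Complex.exp (Complex.I * ((m:ℝ)+1) * y) * Complex.exp (2 * (π:ℂ) * Complex.I * k * s / q)
        = Complex.exp (((((m:ℝ)+1) * z : ℝ):ℂ) * Complex.I) := by
      rw [← Complex.exp_add]
      congr 1
      rw [hs, hz]
      push_cast
      field_simp
    have hc2 : Complex.exp (-(Complex.I * ((m:ℝ)+1) * y)) * Complex.exp (2 * (π:ℂ) * Complex.I * k * (-s) / q)
        = Complex.exp ((-((((m:ℝ)+1) * z : ℝ)):ℂ) * Complex.I) := by
      rw [← Complex.exp_add]
      congr 1
      rw [hs, hz]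
      push_cast
      field_simp
      ring
    have hcos : Complex.exp (((((m:ℝ)+1) * z : ℝ):ℂ) * Complex.I)
        + Complex.exp ((-((((m:ℝ)+1) * z : ℝ)):ℂ) * Complex.I)
        = 2 * ((Real.cos (((m:ℝ)+1) * z) : ℝ) : ℂ) := by
      rw [Complex.exp_mul_I, Complex.exp_mul_I, Complex.cos_neg, Complex.sin_neg,
        Complex.ofReal_cos]
      ring
    calc ((a m : ℝ):ℂ) * Complex.exp (Complex.I * ((m:ℝ)+1) * y) * (Complex.exp (2 * (π:ℂ) * Complex.I * k * s / q) * Wh)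
          + ((a m : ℝ):ℂ) * Complex.exp (-(Complex.I * ((m:ℝ)+1) * y)) * (Complex.exp (2 * (π:ℂ) * Complex.I * k * (-s) / q) * Wh)
          - ((a m : ℝ):ℂ) * 2 * Wh
        = ((a m : ℝ):ℂ) * ((Complex.exp (Complex.I * ((m:ℝ)+1) * y) * Complex.exp (2 * (π:ℂ) * Complex.I * k * s / q)
            + Complex.exp (-(Complex.I * ((m:ℝ)+1) * y)) * Complex.exp (2 * (π:ℂ) * Complex.I * k * (-s) / q)
            - 2) * Wh) := by ring
      _ = ((a m : ℝ):ℂ) * ((2 * ((Real.cos (((m:ℝ)+1) * z) : ℝ) : ℂ) - 2) * Wh) := by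
          rw [hc1, hc2, hcos]
      _ = ((a m * (2 * Real.cos (((m:ℝ)+1) * z) - 2) : ℝ) : ℂ) * Wh := by
          push_cast
          ring
  -- assemble
  calc ∑ j ∈ Finset.range q, ec (j:ℤ) * ∑' m : ℕ, ((a m : ℝ):ℂ) *
        (Complex.exp (Complex.I * ((m:ℝ)+1) * y) * W ((j:ℤ) + ((m:ℤ)+1)*t)
          + Complex.exp (-(Complex.I * ((m:ℝ)+1) * y)) * W ((j:ℤ) - ((m:ℤ)+1)*t)
          - 2 * W (j:ℤ))
      = ∑ j ∈ Finset.range q, ∑' m : ℕ, ec (j:ℤ) * (((a m : ℝ):ℂ) *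
          (Complex.exp (Complex.I * ((m:ℝ)+1) * y) * W ((j:ℤ) + ((m:ℤ)+1)*t)
            + Complex.exp (-(Complex.I * ((m:ℝ)+1) * y)) * W ((j:ℤ) - ((m:ℤ)+1)*t)
            - 2 * W (j:ℤ))) := by
        exact Finset.sum_congr rfl fun j _ => (tsum_mul_left).symm
    _ = ∑' m : ℕ, ∑ j ∈ Finset.range q, ec (j:ℤ) * (((a m : ℝ):ℂ) *
          (Complex.exp (Complex.I * ((m:ℝ)+1) * y) * W ((j:ℤ) + ((m:ℤ)+1)*t)
            + Complex.exp (-(Complex.I * ((m:ℝ)+1) * y)) * W ((j:ℤ) - ((m:ℤ)+1)*t)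
            - 2 * W (j:ℤ))) := by
        refine (Summable.tsum_finsetSum ?_).symm
        intro j _
        exact (hsummand (j:ℤ)).mul_left _
    _ = ∑' m : ℕ, ((a m * (2 * Real.cos (((m:ℝ)+1) * z) - 2) : ℝ) : ℂ) * Wh :=
        tsum_congr fun m => hm m
    _ = (∑' m : ℕ, ((a m * (2 * Real.cos (((m:ℝ)+1) * z) - 2) : ℝ) : ℂ)) * Wh :=
        tsum_mul_right
    _ = ((∑' m : ℕ, a m * (2 * Real.cos (((m:ℝ)+1) * z) - 2) : ℝ) : ℂ) * Wh := by
        rw [Complex.ofReal_tsum]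


lemma alpha_abs_summable {d ddiff : ℕ} {τ ν : ℝ} {α : ℕ → Vec d}
    (h : HS1 d ddiff τ α ν) (i : Fin d) : Summable fun m : ℕ => |α (m + 1) i| := by
  apply Summable.of_nonneg_of_le (fun m => abs_nonneg _) _ h.exp_summable
  intro m
  have h1 : |α (m + 1) i| ≤ ‖α (m + 1)‖ := by
    rw [← Real.norm_eq_abs]
    exact norm_le_pi_norm (α (m + 1)) i
  have h2 : (1:ℝ) ≤ Real.exp (((m : ℝ) + 1) * ν) := by
    rw [Real.one_le_exp_iff]
    have hν := h.ν_pos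
    have : (0:ℝ) ≤ (m:ℝ) + 1 := by positivity
    exact mul_nonneg this hν.le
  calc |α (m + 1) i| ≤ ‖α (m + 1)‖ := h1
    _ = ‖α (m + 1)‖ * 1 := (mul_one _).symm
    _ ≤ ‖α (m + 1)‖ * Real.exp (((m : ℝ) + 1) * ν) :=
        mul_le_mul_of_nonneg_left h2 (norm_nonneg _)

lemma Afun_nonneg {d ddiff : ℕ} {τ ν : ℝ} {α : ℕ → Vec d}
    (h : HS1 d ddiff τ α ν) (i : Fin d) (z : ℝ) : 0 ≤ Afun α z i := by
  rcases lt_or_ge (i : ℕ) ddiff with hi | hi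
  · -- reduce z modulo 2π
    set n : ℤ := ⌊z / (2 * π)⌋ with hn
    set z' : ℝ := z - n * (2 * π) with hz'
    have h2π : (0:ℝ) < 2 * π := by positivity
    have hcong : ∀ m : ℕ, Real.cos (((m:ℝ) + 1) * z) = Real.cos (((m:ℝ) + 1) * z') := by
      intro m
      have : ((m:ℝ) + 1) * z = ((m:ℝ) + 1) * z' + ((((m:ℕ) + 1 : ℕ) : ℤ) * n : ℤ) * (2 * π) := by
        rw [hz']
        push_cast
        ring
      rw [this, Real.cos_add_int_mul_two_pi]
    have hAeq : Afun α z i = Afun α z' i := by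
      unfold Afun
      exact tsum_congr fun m => by rw [hcong m]
    rw [hAeq]
    have hz'lb : 0 ≤ z' := by
      rw [hz']
      have := Int.floor_le (z / (2 * π))
      rw [← hn] at this
      have := mul_le_mul_of_nonneg_right this h2π.le
      rw [div_mul_cancel₀ _ h2π.ne'] at this
      linarith
    have hz'ub : z' < 2 * π := by
      rw [hz']
      have := Int.lt_floor_add_one (z / (2 * π))
      rw [← hn] at this
      have := mul_lt_mul_of_pos_right this h2π
      rw [div_mul_cancel₀ _ h2π.ne'] at this
      have hexp : ((n:ℝ) + 1) * (2 * π) = n * (2*π) + 2*π := by ring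
      rw [hexp] at this
      linarith
    rcases eq_or_lt_of_le hz'lb with h0 | h0
    · have : Afun α z' i = 0 := by
        unfold Afun
        rw [← h0]
        have : ∀ m : ℕ, α (m + 1) i * (1 - Real.cos (((m:ℝ) + 1) * 0)) = 0 := by
          intro m; simp
        rw [tsum_congr this, tsum_zero]
      rw [this]
    · exact (h.A_pos i hi z' h0 hz'ub).le
  · -- non-diffusive coordinates: α vanishes
    unfold Afun
    have : ∀ m : ℕ, α (m + 1) i * (1 - Real.cos (((m:ℝ) + 1) * z)) = 0 := by
      intro m
      rw [h.nondiff_zero i hi m, zero_mul]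
    rw [tsum_congr this, tsum_zero]


lemma dot_mulVec_eq {d : ℕ} (N : Matrix (Fin d) (Fin d) ℝ) (x : Vec d) :
    dotV x (N.mulVec x) = ∑ i, ∑ j, N i j * x i * x j := by
  unfold dotV Matrix.mulVec dotProduct
  refine Finset.sum_congr rfl fun i _ => ?_
  rw [Finset.mul_sum]
  exact Finset.sum_congr rfl fun j _ => by ring

lemma exists_coercive {d ddiff : ℕ} (hd : 0 < d) {G : Vec d → ℝ → Vec d} {Pm Pp : Vec d}
    {rbar : ℝ} (hHS3 : HS3 ddiff G Pm Pp rbar) :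
    ∃ (weight : Fin d → ℝ) (wmax c : ℝ), (∀ i, 0 < weight i) ∧ (∀ i, weight i ≤ wmax) ∧
      0 < wmax ∧ 0 < c ∧
      ∀ ρ ∈ Set.Icc (0:ℝ) 1, ∀ x : Vec d,
        c * ∑ i, x i ^ 2 ≤ -∑ i, ∑ j, weight i * (DGrho G Pm Pp rbar ρ) i j * x i * x j := by
  classical
  have main : ∀ (weight : Fin d → ℝ),
      (∀ x : Vec d, x ≠ 0 → 0 < ∑ i, ∑ j, weight i * (-(DUG G Pm rbar)) i j * x i * x j) →
      (∀ x : Vec d, x ≠ 0 → 0 < ∑ i, ∑ j, weight i * (-(DUG G Pp rbar)) i j * x i * x j) →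
      ∃ c : ℝ, 0 < c ∧
      ∀ ρ ∈ Set.Icc (0:ℝ) 1, ∀ x : Vec d,
        c * ∑ i, x i ^ 2 ≤ -∑ i, ∑ j, weight i * (DGrho G Pm Pp rbar ρ) i j * x i * x j := by
    intro weight hm hp
    obtain ⟨cm, hcm, hcm2⟩ := quad_coercive hd _ hm
    obtain ⟨cp, hcp, hcp2⟩ := quad_coercive hd _ hp
    refine ⟨min cm cp, lt_min hcm hcp, ?_⟩
    intro ρ hρ x
    have hsq : (0:ℝ) ≤ ∑ i, x i ^ 2 := by positivity
    have hentry : ∀ i j : Fin d, weight i * (DGrho G Pm Pp rbar ρ) i j * x i * x j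
        = -(ρ * (weight i * (-(DUG G Pm rbar)) i j * x i * x j)
            + (1-ρ) * (weight i * (-(DUG G Pp rbar)) i j * x i * x j)) := by
      intro i j
      simp only [DGrho, Matrix.add_apply, Matrix.smul_apply, Matrix.neg_apply, smul_eq_mul]
      ring
    have hsplit : -∑ i, ∑ j, weight i * (DGrho G Pm Pp rbar ρ) i j * x i * x j
        = ρ * (∑ i, ∑ j, weight i * (-(DUG G Pm rbar)) i j * x i * x j)
          + (1 - ρ) * (∑ i, ∑ j, weight i * (-(DUG G Pp rbar)) i j * x i * x j) := by
      have h1 : ∑ i, ∑ j, weight i * (DGrho G Pm Pp rbar ρ) i j * x i * x j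
          = -(ρ * (∑ i, ∑ j, weight i * (-(DUG G Pm rbar)) i j * x i * x j)
              + (1 - ρ) * (∑ i, ∑ j, weight i * (-(DUG G Pp rbar)) i j * x i * x j)) := by
      
        rw [Finset.mul_sum, Finset.mul_sum, ← Finset.sum_add_distrib, ← Finset.sum_neg_distrib]
        refine Finset.sum_congr rfl fun i _ => ?_
        rw [Finset.mul_sum, Finset.mul_sum, ← Finset.sum_add_distrib, ← Finset.sum_neg_distrib]
        refine Finset.sum_congr rfl fun j _ => ?_
        rw [hentry i j]
      rw [h1, neg_neg]
    rw [hsplit]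
    have e1 := hcm2 x
    have e2 := hcp2 x
    have hmin1 : min cm cp ≤ cm := min_le_left _ _
    have hmin2 : min cm cp ≤ cp := min_le_right _ _
    obtain ⟨hρ0, hρ1⟩ := hρ
    nlinarith [mul_le_mul_of_nonneg_left e1 hρ0,
      mul_le_mul_of_nonneg_left e2 (by linarith : (0:ℝ) ≤ 1 - ρ),
      mul_le_mul_of_nonneg_left (mul_le_mul_of_nonneg_right hmin1 hsq) hρ0,
      mul_le_mul_of_nonneg_left (mul_le_mul_of_nonneg_right hmin2 hsq)
        (by linarith : (0:ℝ) ≤ 1 - ρ)]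
  rcases hHS3 with ⟨ham, hap⟩ | ⟨hbl, Γ, hΓ, hrel⟩
  · -- case (a): weight ≡ 1
    have h1 : ∀ (P : Vec d), PosDefQ (-(DUG G P rbar)) →
        ∀ x : Vec d, x ≠ 0 → 0 < ∑ i, ∑ j, (fun _ : Fin d => (1:ℝ)) i * (-(DUG G P rbar)) i j * x i * x j := by
      intro P hP x hx
      have := hP x hx
      rw [dot_mulVec_eq] at this
      calc (0:ℝ) < ∑ i, ∑ j, (-(DUG G P rbar)) i j * x i * x j := this
        _ = ∑ i, ∑ j, (fun _ : Fin d => (1:ℝ)) i * (-(DUG G P rbar)) i j * x i * x j :=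
          Finset.sum_congr rfl fun i _ => Finset.sum_congr rfl fun j _ => by ring
    obtain ⟨c, hc, hineq⟩ := main (fun _ => 1) (h1 Pm ham) (h1 Pp hap)
    exact ⟨fun _ => 1, 1, c, fun _ => one_pos, fun _ => le_refl 1, one_pos, hc, hineq⟩
  · -- case (b): block weights
    set weight : Fin d → ℝ := fun i => if (i:ℕ) < ddiff then 1 else Γ with hweight
    have hwpos : ∀ i, 0 < weight i := by
      intro i; rw [hweight]; dsimp only; split
      · exact one_pos
      · exact hΓ
    have hwle : ∀ i, weight i ≤ max 1 Γ := by
      intro i; rw [hweight]; dsimp only; split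
      · exact le_max_left _ _
      · exact le_max_right _ _
    have hpositive : ∀ P : Vec d,
        (∀ x : Vec d, x ≠ 0 → SuppFirst d ddiff x → 0 < dotV x ((-(DUG G P rbar)).mulVec x)) →
        (∀ x : Vec d, x ≠ 0 → SuppLast d ddiff x → 0 < dotV x ((-(DUG G P rbar)).mulVec x)) →
        ∀ x : Vec d, x ≠ 0 → 0 < ∑ i, ∑ j, weight i * (-(DUG G P rbar)) i j * x i * x j := by
      intro P hfirst hlast x hx
      set N : Matrix (Fin d) (Fin d) ℝ := -(DUG G P rbar) with hN
      have hNrel : ∀ i j : Fin d, (i:ℕ) < ddiff → ddiff ≤ (j:ℕ) → N i j = -Γ * N j i := by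
        intro i j hi hj
        rw [hN]
        simp only [Matrix.neg_apply]
        rw [hrel P i j hi hj]
        ring
      set x1 : Vec d := fun i => if (i:ℕ) < ddiff then x i else 0 with hx1
      set x2 : Vec d := fun i => if (i:ℕ) < ddiff then 0 else x i with hx2
      set hfun : Fin d → Fin d → ℝ := fun i j =>
        if (i:ℕ) < ddiff ∧ ddiff ≤ (j:ℕ) then N i j * x i * x j else 0 with hhfun
      have hterm : ∀ i j : Fin d, weight i * N i j * x i * x j
          = N i j * x1 i * x1 j + Γ * (N i j * x2 i * x2 j) + (hfun i j - hfun j i) := by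
        intro i j
        simp only [hweight, hx1, hx2, hhfun]
        by_cases hi : (i:ℕ) < ddiff <;> by_cases hj : (j:ℕ) < ddiff
        · rw [if_pos hi, if_pos hi, if_pos hj, if_pos hi, if_pos hj,
            if_neg (by omega : ¬((i:ℕ) < ddiff ∧ ddiff ≤ (j:ℕ))),
            if_neg (by omega : ¬((j:ℕ) < ddiff ∧ ddiff ≤ (i:ℕ)))]
          ring
        · rw [if_pos hi, if_pos hi, if_neg hj, if_pos hi, if_neg hj,
            if_pos (by omega : (i:ℕ) < ddiff ∧ ddiff ≤ (j:ℕ)),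
            if_neg (by omega : ¬((j:ℕ) < ddiff ∧ ddiff ≤ (i:ℕ)))]
          ring
        · rw [if_neg hi, if_neg hi, if_pos hj, if_neg hi, if_pos hj,
            if_neg (by omega : ¬((i:ℕ) < ddiff ∧ ddiff ≤ (j:ℕ))),
            if_pos (by omega : (j:ℕ) < ddiff ∧ ddiff ≤ (i:ℕ))]
          rw [hNrel j i hj (by omega)]
          ring
        · rw [if_neg hi, if_neg hi, if_neg hj, if_neg hi, if_neg hj,
            if_neg (by omega : ¬((i:ℕ) < ddiff ∧ ddiff ≤ (j:ℕ))),
            if_neg (by omega : ¬((j:ℕ) < ddiff ∧ ddiff ≤ (i:ℕ)))]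
          ring
      have hcancel : (∑ i, ∑ j, hfun i j) - (∑ i, ∑ j, hfun j i) = 0 := by
        rw [Finset.sum_comm (f := fun i j => hfun j i)]
        exact sub_self _
      have hsum : ∑ i, ∑ j, weight i * N i j * x i * x j
          = dotV x1 (N.mulVec x1) + Γ * dotV x2 (N.mulVec x2) := by
        rw [dot_mulVec_eq, dot_mulVec_eq]
        have e0 : ∑ i, ∑ j, weight i * N i j * x i * x j
            = (∑ i, ∑ j, N i j * x1 i * x1 j) + (∑ i, ∑ j, Γ * (N i j * x2 i * x2 j))
              + ((∑ i, ∑ j, hfun i j) - (∑ i, ∑ j, hfun j i)) := by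
          rw [← Finset.sum_sub_distrib]
          conv_rhs => rw [← Finset.sum_add_distrib, ← Finset.sum_add_distrib]
          refine Finset.sum_congr rfl fun i _ => ?_
          rw [← Finset.sum_sub_distrib, ← Finset.sum_add_distrib, ← Finset.sum_add_distrib]
          exact Finset.sum_congr rfl fun j _ => hterm i j
        rw [e0, hcancel, add_zero]
        congr 1
        rw [Finset.mul_sum]
        refine Finset.sum_congr rfl fun i _ => ?_
        rw [Finset.mul_sum]
      rw [hsum]
      -- positivity from block conditions
      have hxsum : ∀ i, x i = x1 i + x2 i := by
        intro i
        simp only [hx1, hx2]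
        by_cases hi : (i:ℕ) < ddiff
        · rw [if_pos hi, if_pos hi, add_zero]
        · rw [if_neg hi, if_neg hi, zero_add]
      have hne : x1 ≠ 0 ∨ x2 ≠ 0 := by
        by_contra hcon
        push_neg at hcon
        apply hx
        funext i
        rw [hxsum i, hcon.1, hcon.2]
        simp
      have h1nn : 0 ≤ dotV x1 (N.mulVec x1) ∧ (x1 ≠ 0 → 0 < dotV x1 (N.mulVec x1)) := by
        constructor
        · by_cases h : x1 = 0
          · rw [h]
            unfold dotV
            simp
          · exact (hfirst x1 h (fun i hi => by simp only [hx1]; rw [if_neg (by omega)])).le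
        · intro h
          exact hfirst x1 h (fun i hi => by simp only [hx1]; rw [if_neg (by omega)])
      have h2nn : 0 ≤ dotV x2 (N.mulVec x2) ∧ (x2 ≠ 0 → 0 < dotV x2 (N.mulVec x2)) := by
        constructor
        · by_cases h : x2 = 0
          · rw [h]
            unfold dotV
            simp
          · exact (hlast x2 h (fun i hi => by simp only [hx2]; rw [if_pos hi])).le
        · intro h
          exact hlast x2 h (fun i hi => by simp only [hx2]; rw [if_pos hi])
      rcases hne with h | h
      · nlinarith [h1nn.2 h, h2nn.1, mul_nonneg hΓ.le h2nn.1]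
      · nlinarith [h2nn.2 h, h1nn.1, mul_pos hΓ (h2nn.2 h)]
    have hm := hpositive Pm (hbl Pm (Set.mem_insert _ _)).1 (hbl Pm (Set.mem_insert _ _)).2
    have hp := hpositive Pp (hbl Pp (Set.mem_insert_of_mem _ rfl)).1
      (hbl Pp (Set.mem_insert_of_mem _ rfl)).2
    obtain ⟨c, hc, hineq⟩ := main weight hm hp
    exact ⟨weight, max 1 Γ, c, hwpos, hwle, lt_of_lt_of_le one_pos (le_max_left _ _), hc, hineq⟩


end AuxLemmas

/-- Under (HS1), (HS2), (HS3_r̄), (HW1_r̄) and (HW2_r̄), for `q ≥ 1` and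
`θ = t/q ∈ q⁻¹{1,…,q}` with `gcd(θq, q) = 1`, there exists `λ* ∈ (0, λ̃]` such that for every
`λ ∈ ℂ` with `Re λ > −λ*`, every `ρ ∈ [0,1]` and every `y ∈ ℝ`, the characteristic operator
`Δ_{q,θ,ρ;λ}(iy)` is injective on the complexification of `ℓ²_{q,⊥;∞}`. -/
theorem statement_5
    {d ddiff : ℕ} {τ ν : ℝ} {α : ℕ → Vec d} {G : Vec d → ℝ → Vec d} {Pm Pp : Vec d}
    {rbar c0 : ℝ} {U0 U0' Φp Φp' Φm Φm' : ℝ → Vec d} {lamT : ℝ}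
    (hHS1 : HS1 d ddiff τ α ν) (hHS2 : HS2 d G Pm Pp)
    (hrbar : rbar ∈ Set.Ioo (0 : ℝ) 1)
    (hHS3 : HS3 ddiff G Pm Pp rbar)
    (hHW1 : HW1 τ α G Pm Pp rbar c0 U0 U0')
    (hHW2 : HW2 τ c0 α G U0 U0' rbar Φp Φp' Φm Φm' lamT)
    (q : ℕ) (hq : 0 < q)
    (t : ℤ) (ht1 : 1 ≤ t) (htq : t ≤ (q : ℤ)) (hgcd : Int.gcd t (q : ℤ) = 1) :
    ∃ lamStar : ℝ, 0 < lamStar ∧ lamStar ≤ lamT ∧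
      ∀ lam : ℂ, -lamStar < lam.re → ∀ ρ ∈ Set.Icc (0 : ℝ) 1, ∀ y : ℝ,
        ∀ V : Fin (q + 1) → VecC d, V (Fin.last q) = V 0 →
          (∀ ζ, charOp q hq τ c0 α G Pm Pp rbar ρ t y lam V ζ = 0) →
          ∀ ζ, V ζ = 0 := by
  classical
  have hd : 0 < d := by have := hHS1.ddiff_pos; have := hHS1.ddiff_le; omega
  obtain ⟨weight, wmax, c, hwpos, hwle, hwmax, hc, hcoer⟩ := exists_coercive hd hHS3
  refine ⟨min lamT (c / wmax), lt_min hHW2.lamT_pos (div_pos hc hwmax), min_le_left _ _, ?_⟩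
  intro lam hlam ρ hρ y V hVper H
  have hlam' : -(c / wmax) < lam.re :=
    lt_of_le_of_lt (neg_le_neg (min_le_right lamT (c/wmax))) hlam
  set W : ℤ → VecC d := extFinC q hq V with hWdef
  have hqZ : (0:ℤ) < (q:ℤ) := by exact_mod_cast hq
  have hidx : ∀ j j' : ℤ, j % (q:ℤ) = j' % (q:ℤ) → zmodIdx q hq j = zmodIdx q hq j' := by
    intro j j' h
    apply Fin.ext
    show ((j % (q:ℤ)).toNat) = ((j' % (q:ℤ)).toNat)
    rw [h]
  have hWcong : ∀ j j' : ℤ, j % (q:ℤ) = j' % (q:ℤ) → W j = W j' := by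
    intro j j' h
    simp only [hWdef, extFinC]
    rw [hidx j j' h]
  have hzval : ∀ j : ℤ, ((((zmodIdx q hq j) : ℕ)) : ℤ) = j % (q:ℤ) := by
    intro j
    unfold zmodIdx
    simp only
    exact Int.toNat_of_nonneg (Int.emod_nonneg j hqZ.ne')
  have hWV : ∀ ζ : Fin (q+1), W ((ζ:ℕ):ℤ) = V ζ := by
    intro ζ
    simp only [hWdef, extFinC]
    rcases lt_or_eq_of_le (Nat.lt_succ_iff.mp ζ.isLt) with hlt | heq
    · have hidx2 : zmodIdx q hq ((ζ:ℕ):ℤ) = ζ := by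
        apply Fin.ext
        show ((((ζ:ℕ):ℤ) % (q:ℤ)).toNat) = (ζ:ℕ)
        rw [Int.emod_eq_of_lt (by positivity) (by exact_mod_cast hlt)]
        simp
      rw [hidx2]
    · have hζ : ζ = Fin.last q := Fin.ext (by simpa using heq)
      subst hζ
      rw [hVper]
      have hidx2 : zmodIdx q hq (((Fin.last q : Fin (q+1)):ℕ):ℤ) = 0 := by
        apply Fin.ext
        show (((((Fin.last q : Fin (q+1)):ℕ):ℤ)) % (q:ℤ)).toNat = 0
        rw [show (((Fin.last q : Fin (q+1)):ℕ):ℤ) = (q:ℤ) by simp, Int.emod_self]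
        simp
      rw [hidx2]
  -- transferred equation
  have hE : ∀ j : ℤ, ∀ i : Fin d,
      ((c0:ℂ)*(y:ℂ)*Complex.I + lam) * W j i
        - (τ:ℂ) * ∑' m : ℕ, ((α (m+1) i : ℝ):ℂ) *
            (Complex.exp (Complex.I * ((m:ℝ)+1) * y) * W (j + ((m:ℤ)+1)*t) i
              + Complex.exp (-(Complex.I * ((m:ℝ)+1) * y)) * W (j - ((m:ℤ)+1)*t) i
              - 2 * W j i)
        - ∑ j', ((DGrho G Pm Pp rbar ρ i j' : ℝ):ℂ) * W j j' = 0 := by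
    intro j i
    have h0 := congrFun (H (zmodIdx q hq j)) i
    unfold charOp at h0
    rw [← hWdef] at h0
    have hVz : V (zmodIdx q hq j) = W j := rfl
    simp only [hVz] at h0
    have hmod : ∀ s : ℤ, ((((zmodIdx q hq j):ℕ):ℤ) + s) % (q:ℤ) = (j + s) % (q:ℤ) := by
      intro s
      rw [hzval, Int.add_emod, Int.emod_emod_of_dvd _ dvd_rfl, ← Int.add_emod]
    have hmods : ∀ s : ℤ, ((((zmodIdx q hq j):ℕ):ℤ) - s) % (q:ℤ) = (j - s) % (q:ℤ) := by
      intro s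
      rw [sub_eq_add_neg, sub_eq_add_neg]
      exact hmod (-s)
    have eplus : ∀ m : ℕ, W ((((zmodIdx q hq j):ℕ):ℤ) + ((m:ℤ)+1)*t) = W (j + ((m:ℤ)+1)*t) :=
      fun m => hWcong _ _ (hmod _)
    have eminus : ∀ m : ℕ, W ((((zmodIdx q hq j):ℕ):ℤ) - ((m:ℤ)+1)*t) = W (j - ((m:ℤ)+1)*t) :=
      fun m => hWcong _ _ (hmods _)
    simp only [eplus, eminus] at h0
    exact h0
  -- bound on W components
  have hBex : ∀ i : Fin d, ∀ j : ℤ, ‖W j i‖ ≤ ∑ ζ : Fin (q+1), ‖V ζ i‖ := by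
    intro i j
    have : W j i = V (zmodIdx q hq j) i := rfl
    rw [this]
    exact Finset.single_le_sum (fun ζ _ => norm_nonneg (V ζ i)) (Finset.mem_univ _)
  -- the Fourier modes vanish
  have hmode : ∀ k : ℕ, k < q → ∀ i : Fin d,
      (∑ j ∈ Finset.range q, Complex.exp (-(2*(Real.pi:ℂ)*Complex.I*k*j)/q) * W (j:ℤ) i) = 0 := by
    intro k hk
    set z : ℝ := y + 2*Real.pi*t*k/q with hz
    set Vh : VecC d := fun i => ∑ j ∈ Finset.range q,
      Complex.exp (-(2*(Real.pi:ℂ)*Complex.I*k*j)/q) * W (j:ℤ) i with hVh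
    have hmodeq : ∀ i, ((c0:ℂ)*(y:ℂ)*Complex.I + lam) * Vh i
        + ((2*τ*Afun α z i : ℝ):ℂ) * Vh i
        - ∑ j', ((DGrho G Pm Pp rbar ρ i j' : ℝ):ℂ) * Vh j' = 0 := by
      intro i
      set ec : ℕ → ℂ := fun j => Complex.exp (-(2*(Real.pi:ℂ)*Complex.I*k*j)/q) with hec
      have h0 : ∑ j ∈ Finset.range q, ec j *
          (((c0:ℂ)*(y:ℂ)*Complex.I + lam) * W (j:ℤ) i
            - (τ:ℂ) * ∑' m : ℕ, ((α (m+1) i : ℝ):ℂ) *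
                (Complex.exp (Complex.I * ((m:ℝ)+1) * y) * W ((j:ℤ) + ((m:ℤ)+1)*t) i
                  + Complex.exp (-(Complex.I * ((m:ℝ)+1) * y)) * W ((j:ℤ) - ((m:ℤ)+1)*t) i
                  - 2 * W (j:ℤ) i)
            - ∑ j', ((DGrho G Pm Pp rbar ρ i j' : ℝ):ℂ) * W (j:ℤ) j') = 0 :=
        Finset.sum_eq_zero fun j _ => by rw [hE (j:ℤ) i, mul_zero]
      -- expand the sum
      have hsplit : ∀ j : ℕ, ec j *
          (((c0:ℂ)*(y:ℂ)*Complex.I + lam) * W (j:ℤ) i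
            - (τ:ℂ) * ∑' m : ℕ, ((α (m+1) i : ℝ):ℂ) *
                (Complex.exp (Complex.I * ((m:ℝ)+1) * y) * W ((j:ℤ) + ((m:ℤ)+1)*t) i
                  + Complex.exp (-(Complex.I * ((m:ℝ)+1) * y)) * W ((j:ℤ) - ((m:ℤ)+1)*t) i
                  - 2 * W (j:ℤ) i)
            - ∑ j', ((DGrho G Pm Pp rbar ρ i j' : ℝ):ℂ) * W (j:ℤ) j')
          = ((c0:ℂ)*(y:ℂ)*Complex.I + lam) * (ec j * W (j:ℤ) i)
            - (τ:ℂ) * (ec j * ∑' m : ℕ, ((α (m+1) i : ℝ):ℂ) *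
                (Complex.exp (Complex.I * ((m:ℝ)+1) * y) * W ((j:ℤ) + ((m:ℤ)+1)*t) i
                  + Complex.exp (-(Complex.I * ((m:ℝ)+1) * y)) * W ((j:ℤ) - ((m:ℤ)+1)*t) i
                  - 2 * W (j:ℤ) i))
            - ∑ j', ((DGrho G Pm Pp rbar ρ i j' : ℝ):ℂ) * (ec j * W (j:ℤ) j') := by
        intro j
        have hS : ∑ j', ((DGrho G Pm Pp rbar ρ i j' : ℝ):ℂ) * (ec j * W (j:ℤ) j')
            = ec j * ∑ j', ((DGrho G Pm Pp rbar ρ i j' : ℝ):ℂ) * W (j:ℤ) j' := by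
          rw [Finset.mul_sum]
          exact Finset.sum_congr rfl fun j' _ => by ring
        rw [hS]
        ring
      rw [Finset.sum_congr rfl fun j _ => hsplit j] at h0
      rw [Finset.sum_sub_distrib, Finset.sum_sub_distrib] at h0
      rw [← Finset.mul_sum, ← Finset.mul_sum] at h0
      rw [Finset.sum_comm] at h0
      have hC : ∀ j' : Fin d, ∑ j ∈ Finset.range q,
          ((DGrho G Pm Pp rbar ρ i j' : ℝ):ℂ) * (ec j * W (j:ℤ) j')
          = ((DGrho G Pm Pp rbar ρ i j' : ℝ):ℂ) * Vh j' := by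
        intro j'
        rw [← Finset.mul_sum, hVh]
      rw [Finset.sum_congr rfl fun j' _ => hC j'] at h0
      -- apply fourier_mode to the middle term
      have hFM : (∑ j ∈ Finset.range q, ec j * ∑' m : ℕ, ((α (m+1) i : ℝ):ℂ) *
            (Complex.exp (Complex.I * ((m:ℝ)+1) * y) * W ((j:ℤ) + ((m:ℤ)+1)*t) i
              + Complex.exp (-(Complex.I * ((m:ℝ)+1) * y)) * W ((j:ℤ) - ((m:ℤ)+1)*t) i
              - 2 * W (j:ℤ) i))
          = ((∑' m : ℕ, α (m+1) i * (2 * Real.cos (((m:ℝ)+1) * z) - 2) : ℝ) : ℂ) * Vh i :=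
        fourier_mode q hq k t y (fun m => α (m+1) i) (alpha_abs_summable hHS1 i)
          (fun j => W j i) (fun j j' h => congrFun (hWcong j j' h) i)
          (∑ ζ : Fin (q+1), ‖V ζ i‖) (hBex i)
      rw [hFM] at h0
      have hAeq : (∑' m : ℕ, α (m+1) i * (2 * Real.cos (((m:ℝ)+1) * z) - 2))
          = -(2 * Afun α z i) := by
        have hterm : ∀ m : ℕ, α (m+1) i * (2 * Real.cos (((m:ℝ)+1) * z) - 2)
            = (-2) * (α (m+1) i * (1 - Real.cos (((m:ℝ)+1) * z))) := fun m => by ring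
        rw [tsum_congr hterm, tsum_mul_left]
        have hAdef : Afun α z i = ∑' m : ℕ, α (m+1) i * (1 - Real.cos (((m:ℝ)+1) * z)) := rfl
        rw [hAdef]
        ring
      rw [hAeq] at h0
      have hcast : (τ:ℂ) * (((-(2 * Afun α z i) : ℝ)):ℂ) = -(((2*τ*Afun α z i : ℝ)):ℂ) := by
        push_cast
        ring
      rw [show (∑ j ∈ Finset.range q, ec j * W (j:ℤ) i) = Vh i from rfl] at h0
      linear_combination h0 + Vh i * hcast
    -- injectivity of the mode matrix
    have hzero : ∀ i, Vh i = 0 := by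
      apply mode_inj lam c0 y τ (fun i => Afun α z i) (fun i => Afun_nonneg hHS1 i z)
        hHS1.τ_pos.le (DGrho G Pm Pp rbar ρ) weight hwpos wmax hwmax hwle c hc
        (hcoer ρ hρ) hlam' Vh
      intro i
      exact hmodeq i
    intro i
    exact hzero i
  -- Fourier inversion
  have hWzero : ∀ j : ℕ, j < q → ∀ i : Fin d, W (j:ℤ) i = 0 := by
    intro j hj i
    exact fourier_inversion q hq (fun j => W (j:ℤ) i)
      (fun k hk => hmode k (Finset.mem_range.mp hk) i) j (Finset.mem_range.mpr hj)
  -- conclude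
  intro ζ
  funext i
  have h1 : V ζ i = W ((ζ:ℕ):ℤ) i := (congrFun (hWV ζ) i).symm
  have h2 : W ((ζ:ℕ):ℤ) = W (((ζ:ℕ) % q : ℕ):ℤ) := by
    apply hWcong
    push_cast
    rw [Int.emod_emod_of_dvd _ dvd_rfl]
  rw [h1, h2]
  have := hWzero ((ζ:ℕ) % q) (Nat.mod_lt _ hq) i
  simpa using this
end
end

section
/- Assume (HS1) and (HS2) hold and pick r̄ ∈ (0,1) so that (HS3_r̄), (HW1_r̄) and (HW2_r̄) are satisfied, and fix integers 1 ≤ k ≤ 6 and q ≥ 1. Then there exists a constant C1 > 0 such that for every M ∈ ℳ_q, every 0 < δ < 1, and every Φ ∈ ℋ¹_{k,M}, setting Ψ = 𝒦_{k,M}Φ + δΦ, one has 2‖Ψ‖²_{ℋ_M} + 2C1‖Φ‖²_{ℋ_M} ≥ c̄0² ‖D_{k,M}Φ‖²_{ℋ_M}. -/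
open MeasureTheory Filter Topology

noncomputable section

variable {d : ℕ}

/-! ### Auxiliary machinery for the proof of statement 10 -/

section Stmt10Aux

set_option maxHeartbeats 1000000

open scoped ENNReal

variable {d : ℕ}

/-- Squared euclidean size of a vector. -/
def dsq {d : ℕ} (x : Vec d) : ℝ := dotV x x

lemma dsq_nonneg (x : Vec d) : 0 ≤ dsq x := by
  unfold dsq dotV
  exact Finset.sum_nonneg fun _ _ => mul_self_nonneg _

lemma dsq_eq (x : Vec d) : dsq x = ∑ i, (x i) ^ 2 := by
  unfold dsq dotV
  exact Finset.sum_congr rfl fun i _ => (pow_two (x i)).symm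

/-- The ℓ² space over the total grid. -/
abbrev lpsp (d : ℕ) := lp (fun _ : ℤ × Fin d => ℝ) 2

lemma two_toReal : ((2 : ℝ≥0∞)).toReal = 2 := by norm_num

lemma two_toReal_pos : (0 : ℝ) < ((2 : ℝ≥0∞)).toReal := by rw [two_toReal]; norm_num

lemma memℓp_two_iff (f : ℤ × Fin d → ℝ) :
    Memℓp f 2 ↔ Summable (fun z => (f z) ^ 2) := by
  rw [memℓp_gen_iff two_toReal_pos]
  have h : (fun z : ℤ × Fin d => ‖f z‖ ^ ((2 : ℝ≥0∞)).toReal) = fun z => (f z) ^ 2 := by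
    funext z; rw [two_toReal, Real.rpow_two, Real.norm_eq_abs, sq_abs]
  rw [h]

lemma lp_norm_sq (W : lpsp d) : ‖W‖ ^ 2 = ∑' z, (W z) ^ 2 := by
  have h := lp.norm_rpow_eq_tsum (p := 2) two_toReal_pos W
  rw [two_toReal] at h
  simp only [Real.rpow_two, Real.norm_eq_abs, sq_abs] at h
  exact h

lemma lp_norm_eq (W : lpsp d) : ‖W‖ = Real.sqrt (∑' z, (W z) ^ 2) := by
  rw [← lp_norm_sq, Real.sqrt_sq (norm_nonneg _)]

lemma le_of_sq_le_sq' {a b : ℝ} (h : a ^ 2 ≤ b ^ 2) (hb : 0 ≤ b) : a ≤ b := by nlinarith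

lemma summable_fst (b : ℤ → ℝ) (hb0 : ∀ j, 0 ≤ b j) (hb : Summable b) :
    Summable (fun z : ℤ × Fin d => b z.1) ∧
      (∑' z : ℤ × Fin d, b z.1) = d * ∑' j, b j := by
  have hfib : ∀ j : ℤ, (∑' _ : Fin d, b j) = (d : ℝ) * b j := by
    intro j
    rw [tsum_fintype]
    simp [Finset.sum_const, Finset.card_univ, nsmul_eq_mul]
  have h1 : Summable (fun z : ℤ × Fin d => b z.1) := by
    apply (summable_prod_of_nonneg (fun z => hb0 z.1)).2
    exact ⟨fun _ => Summable.of_finite, (hb.mul_left (d : ℝ)).congr fun j => (hfib j).symm⟩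
  refine ⟨h1, ?_⟩
  rw [Summable.tsum_prod' h1 (fun _ => Summable.of_finite)]
  calc (∑' (j : ℤ) (_ : Fin d), b j) = ∑' j, (d : ℝ) * b j := tsum_congr hfib
    _ = (d : ℝ) * ∑' j, b j := tsum_mul_left

/-- Shift equivalence of the grid. -/
def shE (d : ℕ) (c : ℤ) : (ℤ × Fin d) ≃ (ℤ × Fin d) where
  toFun z := (z.1 + c, z.2)
  invFun z := (z.1 - c, z.2)
  left_inv z := by simp
  right_inv z := by simp

/-- Shift operator on `lpsp d`. -/
noncomputable def shl (c : ℤ) (W : lpsp d) : lpsp d :=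
  ⟨fun z => W (z.1 + c, z.2), by
    have h := (memℓp_two_iff _).1 (lp.memℓp W)
    exact (memℓp_two_iff _).2 ((((shE d c).summable_iff).2 h).congr fun z => rfl)⟩

lemma shl_coe (c : ℤ) (W : lpsp d) (z : ℤ × Fin d) : shl c W z = W (z.1 + c, z.2) := rfl

lemma shl_norm (c : ℤ) (W : lpsp d) : ‖shl c W‖ = ‖W‖ := by
  rw [lp_norm_eq, lp_norm_eq]
  congr 1
  exact (shE d c).tsum_eq (fun z => (W z) ^ 2)

lemma mulD_mem (g : Fin d → ℝ) (W : lpsp d) :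
    Memℓp (fun z : ℤ × Fin d => g z.2 * W z) 2 := by
  set b : ℝ := ∑ i, |g i| with hb
  have hb0 : ∀ i, |g i| ≤ b :=
    fun i => Finset.single_le_sum (fun i _ => abs_nonneg (g i)) (Finset.mem_univ i)
  apply (memℓp_two_iff _).2
  have hW := (memℓp_two_iff _).1 (lp.memℓp W)
  apply Summable.of_nonneg_of_le (fun z => sq_nonneg _) (fun z => ?_) (hW.mul_left (b ^ 2))
  rw [mul_pow]
  apply mul_le_mul_of_nonneg_right _ (sq_nonneg _)
  calc (g z.2) ^ 2 = |g z.2| ^ 2 := (sq_abs _).symm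
    _ ≤ b ^ 2 := pow_le_pow_left₀ (abs_nonneg _) (hb0 z.2) 2

/-- Diagonal multiplier on `lpsp d`. -/
noncomputable def mulD (g : Fin d → ℝ) (W : lpsp d) : lpsp d :=
  ⟨fun z => g z.2 * W z, mulD_mem g W⟩

lemma mulD_coe (g : Fin d → ℝ) (W : lpsp d) (z : ℤ × Fin d) :
    mulD g W z = g z.2 * W z := rfl

lemma lp_norm_le_of_ptwise (V W : lpsp d) (b : ℝ) (hb : 0 ≤ b)
    (h : ∀ z, |V z| ≤ b * |W z|) : ‖V‖ ≤ b * ‖W‖ := by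
  apply le_of_sq_le_sq' _ (by positivity)
  rw [lp_norm_sq, mul_pow, lp_norm_sq, ← tsum_mul_left]
  apply Summable.tsum_le_tsum _ ((memℓp_two_iff _).1 (lp.memℓp V))
    (((memℓp_two_iff _).1 (lp.memℓp W)).mul_left _)
  intro z
  calc (V z) ^ 2 = |V z| ^ 2 := (sq_abs _).symm
    _ ≤ (b * |W z|) ^ 2 := pow_le_pow_left₀ (abs_nonneg _) (h z) 2
    _ = b ^ 2 * (W z) ^ 2 := by rw [mul_pow, sq_abs]

lemma mulD_norm_le (g : Fin d → ℝ) (W : lpsp d) (b : ℝ) (hb0 : 0 ≤ b)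
    (hb : ∀ i, |g i| ≤ b) : ‖mulD g W‖ ≤ b * ‖W‖ := by
  apply lp_norm_le_of_ptwise _ _ _ hb0
  intro z
  rw [mulD_coe, abs_mul]
  exact mul_le_mul_of_nonneg_right (hb z.2) (abs_nonneg _)

/-- Evaluation at a grid point as a continuous linear map. -/
noncomputable def evalCLM (d : ℕ) (z : ℤ × Fin d) : lpsp d →L[ℝ] ℝ :=
  LinearMap.mkContinuous
    { toFun := fun W => W z
      map_add' := fun _ _ => rfl
      map_smul' := fun _ _ => rfl } 1
    (fun W => by rw [one_mul]; exact lp.norm_apply_le_norm (by norm_num : (2 : ℝ≥0∞) ≠ 0) W z)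

lemma evalCLM_apply (z : ℤ × Fin d) (W : lpsp d) : evalCLM d z W = W z := rfl

/-- The folding equivalence `ℤ × Fin q ≃ ℤ`. -/
def prodEquiv (q : ℕ) (hq : 0 < q) : (ℤ × Fin q) ≃ ℤ where
  toFun w := w.1 * (q : ℤ) + ((w.2 : ℕ) : ℤ)
  invFun j := (j / (q : ℤ), ⟨(j % (q : ℤ)).toNat, by
    have h1 : 0 ≤ j % (q : ℤ) := Int.emod_nonneg j (by exact_mod_cast hq.ne')
    have h2 : j % (q : ℤ) < q := Int.emod_lt_of_pos j (by exact_mod_cast hq)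
    omega⟩)
  left_inv w := by
    obtain ⟨l, ζ⟩ := w
    have hq' : (q : ℤ) ≠ 0 := by exact_mod_cast hq.ne'
    have hζ : ((ζ : ℕ) : ℤ) < q := by exact_mod_cast ζ.isLt
    have hζ0 : (0 : ℤ) ≤ ((ζ : ℕ) : ℤ) := Int.natCast_nonneg _
    have hdiv : (l * (q : ℤ) + ((ζ : ℕ) : ℤ)) / (q : ℤ) = l := by
      rw [add_comm, Int.add_mul_ediv_right _ _ hq', Int.ediv_eq_zero_of_lt hζ0 hζ, zero_add]
    have hmod : (l * (q : ℤ) + ((ζ : ℕ) : ℤ)) % (q : ℤ) = ((ζ : ℕ) : ℤ) := by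
      rw [add_comm, Int.add_mul_emod_self_right]
      exact Int.emod_eq_of_lt hζ0 hζ
    have h2 : ((l * (q : ℤ) + ((ζ : ℕ) : ℤ)) % (q : ℤ)).toNat = (ζ : ℕ) := by
      rw [hmod, Int.toNat_natCast]
    exact Prod.ext (by simpa using hdiv) (Fin.ext (by simpa using h2))
  right_inv j := by
    have h1 : 0 ≤ j % (q : ℤ) := Int.emod_nonneg j (by exact_mod_cast hq.ne')
    show j / (q : ℤ) * (q : ℤ) + (((j % (q : ℤ)).toNat : ℕ) : ℤ) = j
    rw [Int.toNat_of_nonneg h1, mul_comm]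
    exact Int.mul_ediv_add_emod j (q : ℤ)

lemma psi_rep {q : ℕ} (hq : 0 < q) (Φ : Fin (q + 1) → ℤ → Vec d)
    (hcon : HConstraint q Φ) (ζ : Fin (q + 1)) (l : ℤ) :
    Φ ζ l = Φ (zmodIdx q hq (l * (q : ℤ) + ((ζ : ℕ) : ℤ)))
      ((l * (q : ℤ) + ((ζ : ℕ) : ℤ)) / (q : ℤ)) := by
  have hq' : (q : ℤ) ≠ 0 := by exact_mod_cast hq.ne'
  have hle : (ζ : ℕ) ≤ q := Nat.lt_succ_iff.mp ζ.isLt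
  rcases lt_or_eq_of_le hle with hlt | heq
  · have hζ : ((ζ : ℕ) : ℤ) < q := by exact_mod_cast hlt
    have hζ0 : (0 : ℤ) ≤ ((ζ : ℕ) : ℤ) := Int.natCast_nonneg _
    have hmod : (l * (q : ℤ) + ((ζ : ℕ) : ℤ)) % (q : ℤ) = ((ζ : ℕ) : ℤ) := by
      rw [add_comm, Int.add_mul_emod_self_right]
      exact Int.emod_eq_of_lt hζ0 hζ
    have hdiv : (l * (q : ℤ) + ((ζ : ℕ) : ℤ)) / (q : ℤ) = l := by
      rw [add_comm, Int.add_mul_ediv_right _ _ hq', Int.ediv_eq_zero_of_lt hζ0 hζ, zero_add]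
    have hz : zmodIdx q hq (l * (q : ℤ) + ((ζ : ℕ) : ℤ)) = ζ := by
      apply Fin.ext
      show ((l * (q : ℤ) + ((ζ : ℕ) : ℤ)) % (q : ℤ)).toNat = (ζ : ℕ)
      rw [hmod, Int.toNat_natCast]
    rw [hdiv, hz]
  · have hζl : ζ = Fin.last q := Fin.ext (by simpa using heq)
    have hcast : ((ζ : ℕ) : ℤ) = (q : ℤ) := by exact_mod_cast heq
    have harg : l * (q : ℤ) + ((ζ : ℕ) : ℤ) = (l + 1) * (q : ℤ) := by rw [hcast]; ring
    have hmod : (l * (q : ℤ) + ((ζ : ℕ) : ℤ)) % (q : ℤ) = 0 := by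
      rw [harg, Int.mul_emod_left]
    have hdiv : (l * (q : ℤ) + ((ζ : ℕ) : ℤ)) / (q : ℤ) = l + 1 := by
      rw [harg, Int.mul_ediv_cancel _ hq']
    have hz : zmodIdx q hq (l * (q : ℤ) + ((ζ : ℕ) : ℤ)) = 0 := by
      apply Fin.ext
      show ((l * (q : ℤ) + ((ζ : ℕ) : ℤ)) % (q : ℤ)).toNat = (0 : ℕ)
      rw [hmod]
      rfl
    rw [hdiv, hz, hζl]
    exact hcon l

lemma extH_rep {q : ℕ} (hq : 0 < q) (Φ : Fin (q + 1) → ℤ → Vec d) (a b : ℤ) :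
    extH q hq Φ a b = Φ (zmodIdx q hq (a + b * (q : ℤ)))
      ((a + b * (q : ℤ)) / (q : ℤ)) := by
  have hq' : (q : ℤ) ≠ 0 := by exact_mod_cast hq.ne'
  have hmod : (a + b * (q : ℤ)) % (q : ℤ) = a % (q : ℤ) := Int.add_mul_emod_self_right _ _ _
  have hdiv : (a + b * (q : ℤ)) / (q : ℤ) = a / (q : ℤ) + b := Int.add_mul_ediv_right a b hq'
  have h1 : zmodIdx q hq (a + b * (q : ℤ)) = zmodIdx q hq a := by
    apply Fin.ext
    show ((a + b * (q : ℤ)) % (q : ℤ)).toNat = (a % (q : ℤ)).toNat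
    rw [hmod]
  rw [h1, hdiv]
  show Φ (zmodIdx q hq a) (b + a / (q : ℤ)) = Φ (zmodIdx q hq a) (a / (q : ℤ) + b)
  rw [add_comm]

lemma tOf_add_nOf_mul {q p : ℕ} (hq : 0 < q) : tOf q p + nOf q p * (q : ℤ) = (p : ℤ) := by
  have hq' : (q : ℤ) ≠ 0 := by exact_mod_cast hq.ne'
  have hdvd : (q : ℤ) ∣ ((p : ℤ) - tOf q p) := by
    unfold tOf
    split_ifs with h
    · exact dvd_sub (Int.natCast_dvd_natCast.2 (Nat.dvd_of_mod_eq_zero h)) dvd_rfl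
    · have hc : ((p % q : ℕ) : ℤ) = (p : ℤ) % (q : ℤ) := by push_cast; rfl
      rw [hc]
      exact Int.dvd_self_sub_of_emod_eq rfl
  unfold nOf
  rw [Int.ediv_mul_cancel hdvd]
  ring

lemma innerPerp_rep {q : ℕ} (hq : 0 < q) (Φ : Fin (q + 1) → ℤ → Vec d) (f : ℤ → Vec d)
    (hrep : ∀ ζ l, Φ ζ l = f (l * (q : ℤ) + ((ζ : ℕ) : ℤ))) (l : ℤ) :
    innerPerp q (fun ζ => Φ ζ l) (fun ζ => Φ ζ l)
      = (q : ℝ)⁻¹ * ((∑ n ∈ Finset.range q, dsq (f (l * (q : ℤ) + (n : ℤ))))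
          + (dsq (f ((l + 1) * (q : ℤ))) - dsq (f (l * (q : ℤ)))) / 2) := by
  have h0 : Φ 0 l = f (l * (q : ℤ)) := by simpa using hrep 0 l
  have hlast : Φ (Fin.last q) l = f ((l + 1) * (q : ℤ)) := by
    have harg : l * (q : ℤ) + (((Fin.last q : Fin (q + 1)) : ℕ) : ℤ) = (l + 1) * (q : ℤ) := by
      rw [Fin.val_last]
      ring
    rw [hrep (Fin.last q) l, harg]
  have hIoo : ∑ ζ ∈ Finset.Ioo (0 : Fin (q + 1)) (Fin.last q), dotV (Φ ζ l) (Φ ζ l)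
      = ∑ n ∈ Finset.Ioo 0 q, dsq (f (l * (q : ℤ) + (n : ℤ))) := by
    have hm : (Finset.Ioo (0 : Fin (q + 1)) (Fin.last q)).map Fin.valEmbedding
        = Finset.Ioo 0 q := by
      rw [Fin.map_valEmbedding_Ioo]
      simp
    rw [← hm, Finset.sum_map]
    apply Finset.sum_congr rfl
    intro ζ _
    rw [hrep ζ l]
    rfl
  have hsplit : ∑ n ∈ Finset.range q, dsq (f (l * (q : ℤ) + (n : ℤ)))
      = dsq (f (l * (q : ℤ))) + ∑ n ∈ Finset.Ioo 0 q, dsq (f (l * (q : ℤ) + (n : ℤ))) := by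
    rw [Finset.range_eq_Ico, Finset.sum_eq_sum_Ico_succ_bot hq, Finset.Ico_add_one_left_eq_Ioo]
    norm_num
  show (q : ℝ)⁻¹ * ((1 / 2) * dotV (Φ 0 l) (Φ 0 l)
      + (1 / 2) * dotV (Φ (Fin.last q) l) (Φ (Fin.last q) l)
      + ∑ ζ ∈ Finset.Ioo (0 : Fin (q + 1)) (Fin.last q), dotV (Φ ζ l) (Φ ζ l)) = _
  rw [hIoo, h0, hlast, hsplit]
  show (q : ℝ)⁻¹ * ((1 / 2) * dsq (f (l * (q:ℤ))) + (1 / 2) * dsq (f ((l + 1) * (q:ℤ))) + _) = _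
  ring

lemma summable_dsq_of_memH {q : ℕ} (hq : 0 < q) (Φ : Fin (q + 1) → ℤ → Vec d)
    (f : ℤ → Vec d) (hrep : ∀ ζ l, Φ ζ l = f (l * (q : ℤ) + ((ζ : ℕ) : ℤ)))
    (hmem : MemH q Φ) : Summable fun j => dsq (f j) := by
  have hq0 : (0 : ℝ) < q := by exact_mod_cast hq
  set a : ℤ → ℝ := fun j => dsq (f j) with ha
  have ha0 : ∀ j, 0 ≤ a j := fun j => dsq_nonneg _
  have hP : Summable (fun l : ℤ => (q : ℝ)⁻¹ * ((∑ n ∈ Finset.range q,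
      a (l * (q : ℤ) + (n : ℤ))) + (a ((l + 1) * (q : ℤ)) - a (l * (q : ℤ))) / 2)) :=
    hmem.congr fun l => innerPerp_rep hq Φ f hrep l
  have hS : Summable (fun l : ℤ => ∑ n ∈ Finset.range q, a (l * (q : ℤ) + (n : ℤ))) := by
    apply Summable.of_nonneg_of_le
      (fun l => Finset.sum_nonneg fun n _ => ha0 _) (fun l => ?_) (hP.mul_left (2 * (q : ℝ)))
    have h1 : a (l * (q : ℤ)) ≤ ∑ n ∈ Finset.range q, a (l * (q : ℤ) + (n : ℤ)) := by
      have h2 := Finset.single_le_sum (f := fun n : ℕ => a (l * (q : ℤ) + (n : ℤ)))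
        (fun n _ => ha0 _) (Finset.mem_range.2 hq)
      simpa using h2
    have h3 : (2 * (q : ℝ)) * ((q : ℝ)⁻¹ * ((∑ n ∈ Finset.range q,
        a (l * (q : ℤ) + (n : ℤ))) + (a ((l + 1) * (q : ℤ)) - a (l * (q : ℤ))) / 2))
        = 2 * ((∑ n ∈ Finset.range q, a (l * (q : ℤ) + (n : ℤ)))
          + (a ((l + 1) * (q : ℤ)) - a (l * (q : ℤ))) / 2) := by
      field_simp
    rw [h3]
    have h4 := ha0 ((l + 1) * (q : ℤ))
    linarith
  have hprod : Summable (fun w : ℤ × Fin q => a (w.1 * (q : ℤ) + ((w.2 : ℕ) : ℤ))) := by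
    apply (summable_prod_of_nonneg (fun w => ha0 _)).2
    refine ⟨fun _ => Summable.of_finite, ?_⟩
    apply hS.congr
    intro l
    rw [tsum_fintype, ← Fin.sum_univ_eq_sum_range (fun n => a (l * (q : ℤ) + (n : ℤ))) q]
  have hcomp : Summable (a ∘ ⇑(prodEquiv q hq)) := hprod.congr fun w => rfl
  exact ((prodEquiv q hq).summable_iff).1 hcomp

lemma innerH_formula {q : ℕ} (hq : 0 < q) (M : ℝ) (Φ : Fin (q + 1) → ℤ → Vec d)
    (f : ℤ → Vec d) (hrep : ∀ ζ l, Φ ζ l = f (l * (q : ℤ) + ((ζ : ℕ) : ℤ)))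
    (hf : Summable fun j => dsq (f j)) :
    innerH q M Φ Φ = M⁻¹ * ((q : ℝ)⁻¹ * ∑' j, dsq (f j)) := by
  have hq' : (q : ℤ) ≠ 0 := by exact_mod_cast hq.ne'
  set a : ℤ → ℝ := fun j => dsq (f j) with ha
  have ha0 : ∀ j, 0 ≤ a j := fun j => dsq_nonneg _
  have hprod : Summable (fun w : ℤ × Fin q => a (w.1 * (q : ℤ) + ((w.2 : ℕ) : ℤ))) :=
    (((prodEquiv q hq).summable_iff).2 hf).congr fun w => rfl
  have hS : Summable (fun l : ℤ => ∑ n ∈ Finset.range q, a (l * (q : ℤ) + (n : ℤ))) := by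
    have h2 := ((summable_prod_of_nonneg (fun w => ha0 _)).1 hprod).2
    apply h2.congr
    intro l
    rw [tsum_fintype, Fin.sum_univ_eq_sum_range (fun n => a (l * (q : ℤ) + (n : ℤ))) q]
  have hb : Summable (fun l : ℤ => a (l * (q : ℤ))) :=
    hf.comp_injective (fun x y h => by exact mul_right_cancel₀ hq' h)
  have hb1 : Summable (fun l : ℤ => a ((l + 1) * (q : ℤ))) :=
    hf.comp_injective (fun x y h => by
      have h2 : x * (q : ℤ) + (q : ℤ) = y * (q : ℤ) + (q : ℤ) := by
        have h1 : (x + 1) * (q : ℤ) = (y + 1) * (q : ℤ) := h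
        ring_nf at h1 ⊢
        linarith
      have := mul_right_cancel₀ hq' (by linarith : x * (q : ℤ) = y * (q : ℤ))
      omega)
  have hT : Summable (fun l : ℤ => (a ((l + 1) * (q : ℤ)) - a (l * (q : ℤ))) / 2) :=
    (hb1.sub hb).div_const 2
  have hTzero : (∑' l : ℤ, (a ((l + 1) * (q : ℤ)) - a (l * (q : ℤ))) / 2) = 0 := by
    have h3 : (∑' l : ℤ, a ((l + 1) * (q : ℤ)) / 2) = ∑' l : ℤ, a (l * (q : ℤ)) / 2 := by
      have h4 := (Equiv.addRight (1 : ℤ)).tsum_eq (fun l : ℤ => a (l * (q : ℤ)) / 2)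
      simpa using h4
    calc (∑' l : ℤ, (a ((l + 1) * (q : ℤ)) - a (l * (q : ℤ))) / 2)
        = ∑' l : ℤ, (a ((l + 1) * (q : ℤ)) / 2 - a (l * (q : ℤ)) / 2) :=
          tsum_congr fun l => by ring
      _ = (∑' l : ℤ, a ((l + 1) * (q : ℤ)) / 2) - ∑' l : ℤ, a (l * (q : ℤ)) / 2 :=
          Summable.tsum_sub (hb1.div_const 2) (hb.div_const 2)
      _ = 0 := by rw [h3, sub_self]
  have hSsum : (∑' l : ℤ, ∑ n ∈ Finset.range q, a (l * (q : ℤ) + (n : ℤ))) = ∑' j, a j := by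
    have h1 : (∑' w : ℤ × Fin q, a (w.1 * (q : ℤ) + ((w.2 : ℕ) : ℤ))) = ∑' j, a j :=
      (tsum_congr fun w => rfl).trans ((prodEquiv q hq).tsum_eq a)
    have h2 := Summable.tsum_prod' hprod (fun _ => Summable.of_finite)
    rw [h2] at h1
    rw [← h1]
    apply tsum_congr
    intro l
    rw [tsum_fintype, Fin.sum_univ_eq_sum_range (fun n => a (l * (q : ℤ) + (n : ℤ))) q]
  unfold innerH
  rw [tsum_congr (fun l => innerPerp_rep hq Φ f hrep l), tsum_mul_left,
    Summable.tsum_add hS hT, hTzero, hSsum]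
  ring

lemma lp_norm_dsq (W : lpsp d) (f : ℤ → Vec d)
    (hWf : ∀ z : ℤ × Fin d, W z = f z.1 z.2) :
    Summable (fun j => dsq (f j)) ∧ ‖W‖ ^ 2 = ∑' j, dsq (f j) := by
  have hs : Summable (fun z : ℤ × Fin d => (f z.1 z.2) ^ 2) :=
    ((memℓp_two_iff _).1 (lp.memℓp W)).congr (fun z => by rw [hWf z])
  have hsum : Summable (fun j : ℤ => dsq (f j)) := by
    have h2 := ((summable_prod_of_nonneg (fun z => sq_nonneg _)).1 hs).2
    apply h2.congr
    intro j
    rw [tsum_fintype, ← dsq_eq]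
  refine ⟨hsum, ?_⟩
  rw [lp_norm_sq]
  calc (∑' z : ℤ × Fin d, (W z) ^ 2) = ∑' z : ℤ × Fin d, (f z.1 z.2) ^ 2 :=
        tsum_congr fun z => by rw [hWf z]
    _ = ∑' (j : ℤ) (i : Fin d), (f j i) ^ 2 := Summable.tsum_prod' hs (fun _ => Summable.of_finite)
    _ = ∑' j, dsq (f j) := tsum_congr fun j => by rw [tsum_fintype, ← dsq_eq]

lemma memℓp_of_dsq (f : ℤ → Vec d) (hf : Summable fun j => dsq (f j)) :
    Memℓp (fun z : ℤ × Fin d => f z.1 z.2) 2 := by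
  apply (memℓp_two_iff _).2
  apply (summable_prod_of_nonneg (fun z => sq_nonneg _)).2
  refine ⟨fun _ => Summable.of_finite, ?_⟩
  apply hf.congr
  intro j
  rw [dsq_eq, ← tsum_fintype (L := SummationFilter.unconditional _)]

end Stmt10Aux

set_option maxHeartbeats 2000000

/-- Under (HS1), (HS2), (HS3_r̄), (HW1_r̄) and (HW2_r̄), for fixed
`1 ≤ k ≤ 6` and `q ≥ 1` there is `C₁ > 0` so that for every `M = p/q ∈ ℳ_q`, every
`0 < δ < 1` and every `Φ ∈ ℋ¹_{k,M}`, with `Ψ = 𝒦_{k,M}Φ + δΦ`,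
`2‖Ψ‖²_{ℋ_M} + 2C₁‖Φ‖²_{ℋ_M} ≥ c̄₀² ‖D_{k,M}Φ‖²_{ℋ_M}`. -/
theorem statement_10
    {d ddiff : ℕ} {τ ν : ℝ} {α : ℕ → Vec d} {G : Vec d → ℝ → Vec d} {Pm Pp : Vec d}
    {rbar c0 : ℝ} {U0 U0' Φp Φp' Φm Φm' : ℝ → Vec d} {lamT : ℝ}
    (hHS1 : HS1 d ddiff τ α ν) (hHS2 : HS2 d G Pm Pp)
    (hrbar : rbar ∈ Set.Ioo (0 : ℝ) 1)
    (hHS3 : HS3 ddiff G Pm Pp rbar)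
    (hHW1 : HW1 τ α G Pm Pp rbar c0 U0 U0')
    (hHW2 : HW2 τ c0 α G U0 U0' rbar Φp Φp' Φm Φm' lamT)
    (k : ℕ) (hk1 : 1 ≤ k) (hk6 : k ≤ 6) (q : ℕ) (hq : 0 < q)
    (μ : ℕ → ℝ) (β : ℝ) (hBDF : BDFcoeff k μ β) :
    ∃ C1 : ℝ, 0 < C1 ∧
      ∀ p : ℕ, Nat.Coprime p q → q ≤ p →
      ∀ δ : ℝ, 0 < δ → δ < 1 →
      ∀ Φ : Fin (q + 1) → ℤ → Vec d, HConstraint q Φ → MemH q Φ →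
        c0 ^ 2 * (normH q ((p : ℝ) / q) (DkH q k μ β ((p : ℝ) / q) Φ)) ^ 2 ≤
          2 * (normH q ((p : ℝ) / q)
              (fun ζ l => KkM q hq τ c0 α G U0 rbar k μ β p (tOf q p) (nOf q p) Φ ζ l
                + δ • Φ ζ l)) ^ 2
            + 2 * C1 * (normH q ((p : ℝ) / q) Φ) ^ 2 := by
  classical
  obtain ⟨CU, hCU⟩ := hHW1.bounded
  have hτ := hHS1.τ_pos
  have hν := hHS1.ν_pos
  -- smoothness of `U ↦ G U rbar` and a uniform bound on the Jacobian along the wave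
  have hφ : ContDiff ℝ 2 (fun V : Vec d => G V rbar) := by
    have h2 : ContDiff ℝ 2 (fun V : Vec d => (V, rbar)) := contDiff_id.prodMk contDiff_const
    have h3 : ContDiffOn ℝ 2
        ((fun z : Vec d × ℝ => G z.1 z.2) ∘ (fun V : Vec d => (V, rbar))) Set.univ :=
      hHS2.smooth.comp (h2.contDiffOn (s := Set.univ)) (fun V _ => ⟨trivial, hrbar⟩)
    exact contDiffOn_univ.1 h3
  have hφi : ∀ i : Fin d, ContDiff ℝ 2 (fun V : Vec d => G V rbar i) := fun i =>
    (ContinuousLinearMap.proj (R := ℝ) (φ := fun _ : Fin d => ℝ) i).contDiff.comp hφ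
  have hcont : Continuous
      (fun U : Vec d => ∑ i : Fin d, ‖fderiv ℝ (fun V : Vec d => G V rbar i) U‖) :=
    continuous_finset_sum _ fun i _ => ((hφi i).continuous_fderiv (by norm_num)).norm
  obtain ⟨K0, hK0⟩ := (isCompact_closedBall (0 : Vec d) CU).exists_bound_of_continuousOn
    hcont.continuousOn
  set K : ℝ := max K0 0 with hK
  have hKnn : 0 ≤ K := le_max_right _ _
  have hDUGbd : ∀ (x : ℝ) (i j' : Fin d), |DUG G (U0 x) rbar i j'| ≤ K := by
    intro x i j'
    have hU : U0 x ∈ Metric.closedBall (0 : Vec d) CU := mem_closedBall_zero_iff.2 (hCU x)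
    have hsingle : ‖(Pi.single j' (1 : ℝ) : Vec d)‖ ≤ 1 := by
      rw [pi_norm_le_iff_of_nonneg zero_le_one]
      intro i'
      rcases eq_or_ne i' j' with h | h <;> simp [Pi.single_apply, h]
    have h1 : |DUG G (U0 x) rbar i j'|
        ≤ ‖fderiv ℝ (fun V : Vec d => G V rbar i) (U0 x)‖ := by
      have h2 := (fderiv ℝ (fun V : Vec d => G V rbar i) (U0 x)).le_opNorm
        (Pi.single j' (1 : ℝ))
      calc |DUG G (U0 x) rbar i j'|
          = ‖fderiv ℝ (fun V : Vec d => G V rbar i) (U0 x) (Pi.single j' (1 : ℝ))‖ := by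
            rw [Real.norm_eq_abs]; rfl
        _ ≤ ‖fderiv ℝ (fun V : Vec d => G V rbar i) (U0 x)‖
            * ‖(Pi.single j' (1 : ℝ) : Vec d)‖ := h2
        _ ≤ ‖fderiv ℝ (fun V : Vec d => G V rbar i) (U0 x)‖ * 1 :=
            mul_le_mul_of_nonneg_left hsingle (norm_nonneg _)
        _ = _ := mul_one _
    have h4 : ‖fderiv ℝ (fun V : Vec d => G V rbar i) (U0 x)‖
        ≤ ∑ i' : Fin d, ‖fderiv ℝ (fun V : Vec d => G V rbar i') (U0 x)‖ :=
      Finset.single_le_sum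
        (f := fun i' : Fin d => ‖fderiv ℝ (fun V : Vec d => G V rbar i') (U0 x)‖)
        (fun _ _ => norm_nonneg _) (Finset.mem_univ i)
    have h5 := hK0 _ hU
    have h7 : (0 : ℝ) ≤ ∑ i' : Fin d, ‖fderiv ℝ (fun V : Vec d => G V rbar i') (U0 x)‖ :=
      Finset.sum_nonneg fun _ _ => norm_nonneg _
    rw [Real.norm_eq_abs, abs_of_nonneg h7] at h5
    have h8 : K0 ≤ K := le_max_left _ _
    linarith
  -- summability of the coefficients
  have hαs : Summable (fun m : ℕ => ‖α (m + 1)‖) := by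
    apply Summable.of_nonneg_of_le (fun m => norm_nonneg _) (fun m => ?_) hHS1.exp_summable
    exact le_mul_of_one_le_right (norm_nonneg _)
      (Real.one_le_exp (mul_nonneg (by positivity) hν.le))
  set SA : ℝ := ∑' m : ℕ, ‖α (m + 1)‖ with hSA
  have hSA0 : 0 ≤ SA := tsum_nonneg fun m => norm_nonneg _
  set CΔ : ℝ := 4 * τ * SA with hCΔ
  have hCΔ0 : 0 ≤ CΔ := mul_nonneg (by linarith) hSA0
  set CB : ℝ := K * d with hCB
  have hCB0 : 0 ≤ CB := mul_nonneg hKnn (Nat.cast_nonneg d)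
  set C' : ℝ := CΔ + CB + 1 with hC'
  have hC'0 : 0 < C' := by rw [hC']; linarith
  refine ⟨C' ^ 2, pow_pos hC'0 2, ?_⟩
  intro p hcop hqp δ hδ0 hδ1 Φ hcon hmem
  have hp0 : 0 < p := lt_of_lt_of_le hq hqp
  have hq' : (q : ℤ) ≠ 0 := by exact_mod_cast hq.ne'
  set Mr : ℝ := (p : ℝ) / (q : ℝ) with hMr
  have hMr0 : 0 < Mr := div_pos (by exact_mod_cast hp0) (by exact_mod_cast hq)
  -- the grid representative of `Φ`
  set ψ : ℤ → Vec d := fun j => Φ (zmodIdx q hq j) (j / (q : ℤ)) with hψ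
  have hrep : ∀ (ζ : Fin (q + 1)) (l : ℤ), Φ ζ l = ψ (l * (q : ℤ) + ((ζ : ℕ) : ℤ)) := by
    intro ζ l
    rw [hψ]
    exact psi_rep hq Φ hcon ζ l
  have hext : ∀ a b : ℤ, extH q hq Φ a b = ψ (a + b * (q : ℤ)) := by
    intro a b
    rw [hψ]
    exact extH_rep hq Φ a b
  have htn : tOf q p + nOf q p * (q : ℤ) = (p : ℤ) := tOf_add_nOf_mul hq
  have hfψ : Summable fun j => dsq (ψ j) := summable_dsq_of_memH hq Φ ψ hrep hmem
  set F : lpsp d := ⟨fun z => ψ z.1 z.2, memℓp_of_dsq ψ hfψ⟩ with hFdef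
  have hFcoe : ∀ z : ℤ × Fin d, F z = ψ z.1 z.2 := fun z => by rw [hFdef]
  obtain ⟨-, hFnorm⟩ := lp_norm_dsq F ψ hFcoe
  -- grid representatives of the operators
  set Dg : ℤ → Vec d := fun j => β⁻¹ • Mr • ∑ n' ∈ Finset.range (k + 1),
      μ n' • ψ (j - ((k : ℤ) - (n' : ℤ)) * (q : ℤ)) with hDg
  have hDrep : ∀ (ζ : Fin (q + 1)) (l : ℤ),
      DkH q k μ β Mr Φ ζ l = Dg (l * (q : ℤ) + ((ζ : ℕ) : ℤ)) := by
    intro ζ l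
    show β⁻¹ • Mr • ∑ n' ∈ Finset.range (k + 1), μ n' • Φ ζ (l - ((k : ℤ) - (n' : ℤ)))
        = β⁻¹ • Mr • ∑ n' ∈ Finset.range (k + 1),
          μ n' • ψ (l * (q : ℤ) + ((ζ : ℕ) : ℤ) - ((k : ℤ) - (n' : ℤ)) * (q : ℤ))
    congr 1
    congr 1
    apply Finset.sum_congr rfl
    intro n' _
    have harg : (l - ((k : ℤ) - (n' : ℤ))) * (q : ℤ) + ((ζ : ℕ) : ℤ)
        = l * (q : ℤ) + ((ζ : ℕ) : ℤ) - ((k : ℤ) - (n' : ℤ)) * (q : ℤ) := by ring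
    rw [hrep ζ (l - ((k : ℤ) - (n' : ℤ))), harg]
  set Δg : ℤ → Vec d := fun j i => τ * ∑' m : ℕ, α (m + 1) i *
      (ψ (j + ((m : ℤ) + 1) * (p : ℤ)) i + ψ (j - ((m : ℤ) + 1) * (p : ℤ)) i
        - 2 * ψ j i) with hΔg
  have hΔrep : ∀ (ζ : Fin (q + 1)) (l : ℤ),
      ΔMop q hq τ α (tOf q p) (nOf q p) Φ ζ l = Δg (l * (q : ℤ) + ((ζ : ℕ) : ℤ)) := by
    intro ζ l
    funext i
    show τ * ∑' m : ℕ, α (m + 1) i *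
        (extH q hq Φ (((ζ : ℕ) : ℤ) + ((m : ℤ) + 1) * tOf q p)
            (l + ((m : ℤ) + 1) * nOf q p) i
          + extH q hq Φ (((ζ : ℕ) : ℤ) - ((m : ℤ) + 1) * tOf q p)
            (l - ((m : ℤ) + 1) * nOf q p) i
          - 2 * Φ ζ l i)
      = τ * ∑' m : ℕ, α (m + 1) i *
        (ψ (l * (q : ℤ) + ((ζ : ℕ) : ℤ) + ((m : ℤ) + 1) * (p : ℤ)) i
          + ψ (l * (q : ℤ) + ((ζ : ℕ) : ℤ) - ((m : ℤ) + 1) * (p : ℤ)) i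
          - 2 * ψ (l * (q : ℤ) + ((ζ : ℕ) : ℤ)) i)
    congr 1
    apply tsum_congr
    intro m
    have e1 : ((ζ : ℕ) : ℤ) + ((m : ℤ) + 1) * tOf q p
        + (l + ((m : ℤ) + 1) * nOf q p) * (q : ℤ)
        = l * (q : ℤ) + ((ζ : ℕ) : ℤ) + ((m : ℤ) + 1) * (p : ℤ) := by
      rw [← htn]; ring
    have e2 : ((ζ : ℕ) : ℤ) - ((m : ℤ) + 1) * tOf q p
        + (l - ((m : ℤ) + 1) * nOf q p) * (q : ℤ)
        = l * (q : ℤ) + ((ζ : ℕ) : ℤ) - ((m : ℤ) + 1) * (p : ℤ) := by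
      rw [← htn]; ring
    rw [hext, hext, e1, e2, hrep ζ l]
  set Bg : ℤ → Vec d := fun j => (DUG G (U0 ((j : ℝ) / (p : ℝ))) rbar).mulVec (ψ j) with hBg
  set fΨ : ℤ → Vec d := fun j => c0 • Dg j - Δg j - Bg j + δ • ψ j with hfΨ
  have hΨrep : ∀ (ζ : Fin (q + 1)) (l : ℤ),
      KkM q hq τ c0 α G U0 rbar k μ β p (tOf q p) (nOf q p) Φ ζ l + δ • Φ ζ l
        = fΨ (l * (q : ℤ) + ((ζ : ℕ) : ℤ)) := by
    intro ζ l
    show c0 • DkH q k μ β Mr Φ ζ l - ΔMop q hq τ α (tOf q p) (nOf q p) Φ ζ l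
        - (DUG G (U0 (((l * (q : ℤ) + ((ζ : ℕ) : ℤ) : ℤ) : ℝ) / (p : ℝ))) rbar).mulVec
            (Φ ζ l)
        + δ • Φ ζ l
      = c0 • Dg (l * (q : ℤ) + ((ζ : ℕ) : ℤ)) - Δg (l * (q : ℤ) + ((ζ : ℕ) : ℤ))
        - Bg (l * (q : ℤ) + ((ζ : ℕ) : ℤ)) + δ • ψ (l * (q : ℤ) + ((ζ : ℕ) : ℤ))
    rw [hDrep ζ l, hΔrep ζ l, hrep ζ l, hBg]
  -- the lp elements
  set Dlp : lpsp d := β⁻¹ • Mr • ∑ n' ∈ Finset.range (k + 1),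
      μ n' • shl (-(((k : ℤ) - (n' : ℤ)) * (q : ℤ))) F with hDlp
  have hDcoe : ∀ z : ℤ × Fin d, Dlp z = Dg z.1 z.2 := by
    intro z
    rw [hDlp, hDg]
    show (β⁻¹ • Mr • ∑ n' ∈ Finset.range (k + 1),
        μ n' • shl (-(((k : ℤ) - (n' : ℤ)) * (q : ℤ))) F) z
      = (β⁻¹ • Mr • ∑ n' ∈ Finset.range (k + 1),
        μ n' • ψ (z.1 - ((k : ℤ) - (n' : ℤ)) * (q : ℤ))) z.2
    rw [lp.coeFn_smul, Pi.smul_apply, lp.coeFn_smul, Pi.smul_apply, lp.coeFn_sum,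
      Finset.sum_apply, Pi.smul_apply, Pi.smul_apply, Finset.sum_apply]
    have hterm : ∀ n' ∈ Finset.range (k + 1),
        ((μ n' • shl (-(((k : ℤ) - (n' : ℤ)) * (q : ℤ))) F : lpsp d) : ℤ × Fin d → ℝ) z
          = (μ n' • ψ (z.1 - ((k : ℤ) - (n' : ℤ)) * (q : ℤ))) z.2 := by
      intro n' _
      have harg : z.1 + -(((k : ℤ) - (n' : ℤ)) * (q : ℤ))
          = z.1 - ((k : ℤ) - (n' : ℤ)) * (q : ℤ) := by ring
      simp only [lp.coeFn_smul, Pi.smul_apply, shl_coe, hFcoe]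
      rw [harg]
    rw [Finset.sum_congr rfl hterm]
  obtain ⟨hsD, hDnsq⟩ := lp_norm_dsq Dlp Dg hDcoe
  -- the Δ part
  set wlp : ℕ → lpsp d := fun m => shl (((m : ℤ) + 1) * (p : ℤ)) F
      + shl (-(((m : ℤ) + 1) * (p : ℤ))) F - (2 : ℝ) • F with hwlp
  have hwnorm : ∀ m, ‖wlp m‖ ≤ 4 * ‖F‖ := by
    intro m
    rw [hwlp]
    have h1 := norm_sub_le (shl (((m : ℤ) + 1) * (p : ℤ)) F
      + shl (-(((m : ℤ) + 1) * (p : ℤ))) F) ((2 : ℝ) • F)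
    have h2 := norm_add_le (shl (((m : ℤ) + 1) * (p : ℤ)) F)
      (shl (-(((m : ℤ) + 1) * (p : ℤ))) F)
    rw [shl_norm, shl_norm] at h2
    have h3 : ‖(2 : ℝ) • F‖ = 2 * ‖F‖ := by rw [norm_smul]; simp
    linarith
  set glp : ℕ → lpsp d := fun m => mulD (fun i => τ * α (m + 1) i) (wlp m) with hglp
  have hgnorm : ∀ m, ‖glp m‖ ≤ 4 * τ * ‖F‖ * ‖α (m + 1)‖ := by
    intro m
    have h1 : ‖glp m‖ ≤ (τ * ‖α (m + 1)‖) * ‖wlp m‖ := by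
      rw [hglp]
      apply mulD_norm_le _ _ _ (mul_nonneg hτ.le (norm_nonneg _))
      intro i
      rw [abs_mul, abs_of_pos hτ]
      have h2 : |α (m + 1) i| ≤ ‖α (m + 1)‖ := by
        rw [← Real.norm_eq_abs]
        exact norm_le_pi_norm (α (m + 1)) i
      exact mul_le_mul_of_nonneg_left h2 hτ.le
    calc ‖glp m‖ ≤ (τ * ‖α (m + 1)‖) * ‖wlp m‖ := h1
      _ ≤ (τ * ‖α (m + 1)‖) * (4 * ‖F‖) :=
          mul_le_mul_of_nonneg_left (hwnorm m) (mul_nonneg hτ.le (norm_nonneg _))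
      _ = 4 * τ * ‖F‖ * ‖α (m + 1)‖ := by ring
  have hgsum : Summable (fun m => ‖glp m‖) :=
    Summable.of_nonneg_of_le (fun m => norm_nonneg _) hgnorm (hαs.mul_left _)
  have hgS : Summable glp := hgsum.of_norm
  set Hlp : lpsp d := ∑' m, glp m with hHlp
  have hHnorm : ‖Hlp‖ ≤ CΔ * ‖F‖ := by
    rw [hHlp]
    calc ‖∑' m, glp m‖ ≤ ∑' m, ‖glp m‖ := norm_tsum_le_tsum_norm hgsum
      _ ≤ ∑' m, 4 * τ * ‖F‖ * ‖α (m + 1)‖ := Summable.tsum_le_tsum hgnorm hgsum (hαs.mul_left _)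
      _ = CΔ * ‖F‖ := by rw [tsum_mul_left, hCΔ, hSA]; ring
  have hHcoe : ∀ z : ℤ × Fin d, Hlp z = Δg z.1 z.2 := by
    intro z
    have h1 : Hlp z = ∑' m, glp m z := by
      rw [hHlp]
      have h2 := (evalCLM d z).map_tsum hgS
      simpa [evalCLM_apply] using h2
    rw [h1]
    have h3 : ∀ m : ℕ, glp m z = τ * (α (m + 1) z.2 *
        (ψ (z.1 + ((m : ℤ) + 1) * (p : ℤ)) z.2 + ψ (z.1 - ((m : ℤ) + 1) * (p : ℤ)) z.2
          - 2 * ψ z.1 z.2)) := by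
      intro m
      rw [hglp]
      have h4 : wlp m z = ψ (z.1 + ((m : ℤ) + 1) * (p : ℤ)) z.2
          + ψ (z.1 - ((m : ℤ) + 1) * (p : ℤ)) z.2 - 2 * ψ z.1 z.2 := by
        rw [hwlp]
        show (shl (((m : ℤ) + 1) * (p : ℤ)) F + shl (-(((m : ℤ) + 1) * (p : ℤ))) F
            - (2 : ℝ) • F) z = _
        rw [lp.coeFn_sub, Pi.sub_apply, lp.coeFn_add, Pi.add_apply, lp.coeFn_smul,
          Pi.smul_apply, shl_coe, shl_coe, hFcoe, hFcoe, hFcoe, smul_eq_mul]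
        show ψ (z.1 + ((m : ℤ) + 1) * (p : ℤ)) z.2
            + ψ (z.1 + -(((m : ℤ) + 1) * (p : ℤ))) z.2 - 2 * ψ z.1 z.2 = _
        rw [← sub_eq_add_neg]
      rw [mulD_coe, h4]
      ring
    rw [tsum_congr h3, tsum_mul_left, hΔg]
  -- the B part
  have hBptw : ∀ z : ℤ × Fin d, (Bg z.1 z.2) ^ 2 ≤ (K ^ 2 * d) * dsq (ψ z.1) := by
    intro z
    have hBexp : Bg z.1 z.2
        = ∑ j' : Fin d, DUG G (U0 ((z.1 : ℝ) / (p : ℝ))) rbar z.2 j' * ψ z.1 j' := by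
      rw [hBg]
      show (DUG G (U0 ((z.1 : ℝ) / (p : ℝ))) rbar).mulVec (ψ z.1) z.2 = _
      simp [Matrix.mulVec, dotProduct]
    have h1 : |Bg z.1 z.2| ≤ K * ∑ j' : Fin d, |ψ z.1 j'| := by
      rw [hBexp]
      calc |∑ j' : Fin d, DUG G (U0 ((z.1 : ℝ) / (p : ℝ))) rbar z.2 j' * ψ z.1 j'|
          ≤ ∑ j' : Fin d, |DUG G (U0 ((z.1 : ℝ) / (p : ℝ))) rbar z.2 j' * ψ z.1 j'| :=
            Finset.abs_sum_le_sum_abs _ _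
        _ ≤ ∑ j' : Fin d, K * |ψ z.1 j'| := Finset.sum_le_sum fun j' _ => by
            rw [abs_mul]
            exact mul_le_mul_of_nonneg_right (hDUGbd _ _ _) (abs_nonneg _)
        _ = K * ∑ j' : Fin d, |ψ z.1 j'| := (Finset.mul_sum _ _ _).symm
    have h2 : (∑ j' : Fin d, |ψ z.1 j'|) ^ 2 ≤ (d : ℝ) * ∑ j' : Fin d, |ψ z.1 j'| ^ 2 := by
      have h3 := sq_sum_le_card_mul_sum_sq (s := (Finset.univ : Finset (Fin d)))
        (f := fun j' => |ψ z.1 j'|)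
      simpa using h3
    calc (Bg z.1 z.2) ^ 2 = |Bg z.1 z.2| ^ 2 := (sq_abs _).symm
      _ ≤ (K * ∑ j' : Fin d, |ψ z.1 j'|) ^ 2 := pow_le_pow_left₀ (abs_nonneg _) h1 2
      _ = K ^ 2 * (∑ j' : Fin d, |ψ z.1 j'|) ^ 2 := by rw [mul_pow]
      _ ≤ K ^ 2 * ((d : ℝ) * ∑ j' : Fin d, |ψ z.1 j'| ^ 2) :=
          mul_le_mul_of_nonneg_left h2 (sq_nonneg _)
      _ = (K ^ 2 * d) * dsq (ψ z.1) := by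
          rw [dsq_eq]
          simp only [sq_abs]
          ring
  have hψfst := summable_fst (d := d) (fun j => dsq (ψ j)) (fun j => dsq_nonneg _) hfψ
  have hBmem : Memℓp (fun z : ℤ × Fin d => Bg z.1 z.2) 2 := by
    apply (memℓp_two_iff _).2
    exact Summable.of_nonneg_of_le (fun z => sq_nonneg _) hBptw (hψfst.1.mul_left _)
  set Blp : lpsp d := ⟨fun z => Bg z.1 z.2, hBmem⟩ with hBlp
  have hBcoe : ∀ z : ℤ × Fin d, Blp z = Bg z.1 z.2 := fun z => by rw [hBlp]
  have hBnorm : ‖Blp‖ ≤ CB * ‖F‖ := by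
    apply le_of_sq_le_sq' _ (mul_nonneg hCB0 (norm_nonneg _))
    rw [lp_norm_sq]
    calc (∑' z : ℤ × Fin d, (Blp z) ^ 2) ≤ ∑' z : ℤ × Fin d, (K ^ 2 * d) * dsq (ψ z.1) := by
          refine Summable.tsum_le_tsum (fun z => ?_) ((memℓp_two_iff _).1 (lp.memℓp Blp))
            (hψfst.1.mul_left _)
          rw [hBcoe z]
          exact hBptw z
      _ = (K ^ 2 * d) * ∑' z : ℤ × Fin d, dsq (ψ z.1) := tsum_mul_left
      _ = (K ^ 2 * d) * ((d : ℝ) * ∑' j, dsq (ψ j)) := by rw [hψfst.2]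
      _ = (CB * ‖F‖) ^ 2 := by rw [← hFnorm, hCB]; ring
  -- assembling
  set Ψlp : lpsp d := c0 • Dlp - Hlp - Blp + δ • F with hΨlp
  have hΨcoe : ∀ z : ℤ × Fin d, Ψlp z = fΨ z.1 z.2 := by
    intro z
    rw [hΨlp, hfΨ]
    simp only [lp.coeFn_add, lp.coeFn_sub, lp.coeFn_smul, Pi.add_apply, Pi.sub_apply,
      Pi.smul_apply, smul_eq_mul, hDcoe, hHcoe, hBcoe, hFcoe]
  obtain ⟨hsΨ, hΨnsq⟩ := lp_norm_dsq Ψlp fΨ hΨcoe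
  -- the key identity and estimate
  have hkey0 : c0 • Dlp = Ψlp + Hlp + Blp - δ • F := by
    apply lp.ext
    funext z
    show ((c0 • Dlp : lpsp d)) z = ((Ψlp + Hlp + Blp - δ • F : lpsp d)) z
    simp only [lp.coeFn_add, lp.coeFn_sub, lp.coeFn_smul, Pi.add_apply, Pi.sub_apply,
      Pi.smul_apply, smul_eq_mul, hDcoe, hΨcoe, hHcoe, hBcoe, hFcoe, hfΨ]
    ring
  have hδF : ‖δ • F‖ ≤ ‖F‖ := by
    rw [norm_smul, Real.norm_eq_abs, abs_of_pos hδ0]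
    exact mul_le_of_le_one_left (norm_nonneg _) hδ1.le
  have hDnorm : |c0| * ‖Dlp‖ ≤ ‖Ψlp‖ + C' * ‖F‖ := by
    have h1 : ‖c0 • Dlp‖ = |c0| * ‖Dlp‖ := by rw [norm_smul, Real.norm_eq_abs]
    have h2 : ‖c0 • Dlp‖ ≤ ‖Ψlp‖ + ‖Hlp‖ + ‖Blp‖ + ‖δ • F‖ := by
      rw [hkey0]
      have h3 := norm_sub_le (Ψlp + Hlp + Blp) (δ • F)
      have h4 := norm_add_le (Ψlp + Hlp) Blp
      have h5 := norm_add_le Ψlp Hlp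
      linarith
    rw [h1] at h2
    have h6 : (CΔ + CB + 1) * ‖F‖ = CΔ * ‖F‖ + CB * ‖F‖ + ‖F‖ := by ring
    rw [hC', h6]
    linarith
  -- rewriting the three `normH` squares
  have hq0r : (0 : ℝ) ≤ (q : ℝ)⁻¹ := inv_nonneg.2 (Nat.cast_nonneg q)
  have hMrr : (0 : ℝ) ≤ Mr⁻¹ := inv_nonneg.2 hMr0.le
  have eΦ : normH q Mr Φ ^ 2 = Mr⁻¹ * ((q : ℝ)⁻¹ * ∑' j, dsq (ψ j)) := by
    unfold normH
    rw [innerH_formula hq Mr Φ ψ hrep hfψ]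
    exact Real.sq_sqrt (mul_nonneg hMrr (mul_nonneg hq0r
      (tsum_nonneg fun j => dsq_nonneg _)))
  have eD : normH q Mr (DkH q k μ β Mr Φ) ^ 2
      = Mr⁻¹ * ((q : ℝ)⁻¹ * ∑' j, dsq (Dg j)) := by
    unfold normH
    rw [innerH_formula hq Mr _ Dg hDrep hsD]
    exact Real.sq_sqrt (mul_nonneg hMrr (mul_nonneg hq0r
      (tsum_nonneg fun j => dsq_nonneg _)))
  have eΨ : normH q Mr (fun ζ l =>
      KkM q hq τ c0 α G U0 rbar k μ β p (tOf q p) (nOf q p) Φ ζ l + δ • Φ ζ l) ^ 2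
      = Mr⁻¹ * ((q : ℝ)⁻¹ * ∑' j, dsq (fΨ j)) := by
    unfold normH
    rw [innerH_formula hq Mr _ fΨ hΨrep hsΨ]
    exact Real.sq_sqrt (mul_nonneg hMrr (mul_nonneg hq0r
      (tsum_nonneg fun j => dsq_nonneg _)))
  rw [eD, eΨ, eΦ, ← hDnsq, ← hΨnsq, ← hFnorm]
  have hw : (0 : ℝ) ≤ Mr⁻¹ * (q : ℝ)⁻¹ := mul_nonneg hMrr hq0r
  have gen : ∀ a b c : ℝ, 0 ≤ a → a ≤ b + c → a ^ 2 ≤ 2 * b ^ 2 + 2 * c ^ 2 := by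
    intro a b c ha h
    nlinarith [mul_self_le_mul_self ha h, sq_nonneg (b - c)]
  have hsq : c0 ^ 2 * ‖Dlp‖ ^ 2 ≤ 2 * ‖Ψlp‖ ^ 2 + 2 * C' ^ 2 * ‖F‖ ^ 2 := by
    have e2 := gen (|c0| * ‖Dlp‖) ‖Ψlp‖ (C' * ‖F‖)
      (mul_nonneg (abs_nonneg _) (norm_nonneg _)) hDnorm
    calc c0 ^ 2 * ‖Dlp‖ ^ 2 = (|c0| * ‖Dlp‖) ^ 2 := by rw [mul_pow, sq_abs]
      _ ≤ 2 * ‖Ψlp‖ ^ 2 + 2 * (C' * ‖F‖) ^ 2 := e2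
      _ = 2 * ‖Ψlp‖ ^ 2 + 2 * C' ^ 2 * ‖F‖ ^ 2 := by ring
  have hfin := mul_le_mul_of_nonneg_left hsq hw
  calc c0 ^ 2 * (Mr⁻¹ * ((q : ℝ)⁻¹ * ‖Dlp‖ ^ 2))
      = (Mr⁻¹ * (q : ℝ)⁻¹) * (c0 ^ 2 * ‖Dlp‖ ^ 2) := by ring
    _ ≤ (Mr⁻¹ * (q : ℝ)⁻¹) * (2 * ‖Ψlp‖ ^ 2 + 2 * C' ^ 2 * ‖F‖ ^ 2) := hfin
    _ = 2 * (Mr⁻¹ * ((q : ℝ)⁻¹ * ‖Ψlp‖ ^ 2))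
        + 2 * C' ^ 2 * (Mr⁻¹ * ((q : ℝ)⁻¹ * ‖F‖ ^ 2)) := by ring
end
end
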